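/- arXiv:2602.12654 — 9 statements merged into one kernel-verified Lean document; each statement's English description precedes it below -/
import Mathlib

section
/- Let G = (V,E) be a graph, s ≥ 2, and let G^[s] be the s-blowup of G. Suppose λ ≠ 0 is an eigenvalue of G^[s] with eigenvector x. Then for each vertex i of G, the components of x on the blowup class V_i are either all zero or all nonzero. -/
open Finset

/-- Eigen-equation for the s-blowup hypergraph `G^[s]` (equation (3) of the paper). -/
def IsBlowupEig {V : Type*} [Fintype V] (G : SimpleGraph V) [DecidableRel G.Adj]
    (s : ℕ) (lam : ℂ) (x : V × Fin s → ℂ) : Prop :=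
  ∀ (i : V) (a : Fin s),
    lam * x (i, a) ^ (2 * s - 1) =
      (∏ b ∈ Finset.univ.erase a, x (i, b)) *
        ∑ j ∈ G.neighborFinset i, ∏ b : Fin s, x (j, b)

theorem stmt_3 {V : Type*} [Fintype V] [DecidableEq V]
    (G : SimpleGraph V) [DecidableRel G.Adj] (s : ℕ) (hs : 2 ≤ s)
    (lam : ℂ) (hlam : lam ≠ 0) (x : V × Fin s → ℂ) (hx : x ≠ 0)
    (heig : IsBlowupEig G s lam x) :
    ∀ i : V, (∀ a : Fin s, x (i, a) = 0) ∨ (∀ a : Fin s, x (i, a) ≠ 0) := by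
  intro i
  by_contra h
  push_neg at h
  obtain ⟨⟨c, hc⟩, a, ha⟩ := h
  have hac : c ≠ a := by rintro rfl; exact hc ha
  have h1 := heig i c
  have hprod : (∏ b ∈ Finset.univ.erase c, x (i, b)) = 0 :=
    Finset.prod_eq_zero (Finset.mem_erase.2 ⟨fun h => hac h.symm, Finset.mem_univ a⟩) ha
  rw [hprod, zero_mul, mul_eq_zero] at h1
  rcases h1 with h1 | h1
  · exact hlam h1
  · exact hc (pow_eq_zero_iff (by omega) |>.1 h1)
end

section
/- Let G = (V,E) be a graph and s ≥ 2. If λ ≠ 0 is an eigenvalue of the s-blowup G^[s] with an eigenvector x all of whose components are nonzero, then there exists a map π : V → {2s-th roots of unity} such that λ is an eigenvalue of the matrix A(G_π) with entries π(i)π(j) for {i,j} ∈ E and 0 otherwise. Specifically, with y_i = (Π_{v ∈ V_i} x_v)/π(i), one has λ y_i = Σ_{j : {i,j} ∈ E} π(i)π(j) y_j for all i. -/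
open Finset

theorem stmt_4 {V : Type*} [Fintype V] [DecidableEq V]
    (G : SimpleGraph V) [DecidableRel G.Adj] (s : ℕ) (hs : 2 ≤ s)
    (lam : ℂ) (hlam : lam ≠ 0) (x : V × Fin s → ℂ)
    (hx : ∀ p, x p ≠ 0) (heig : IsBlowupEig G s lam x) :
    ∃ π : V → ℂ, (∀ i, π i ^ (2 * s) = 1) ∧
      ∀ i : V, lam * ((∏ a : Fin s, x (i, a)) / π i) =
        ∑ j ∈ G.neighborFinset i, π i * π j * ((∏ a : Fin s, x (j, a)) / π j) := by
  classical
  set P : V → ℂ := fun i => ∏ a : Fin s, x (i, a) with hP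
  set S : V → ℂ := fun i => ∑ j ∈ G.neighborFinset i, P j with hS
  have hs0 : 0 < s := by omega
  have hPne : ∀ i, P i ≠ 0 := fun i => Finset.prod_ne_zero_iff.mpr fun a _ => hx _
  have key : ∀ i (a : Fin s), lam * x (i, a) ^ (2 * s) = P i * S i := by
    intro i a
    have h := heig i a
    have hpow : x (i, a) ^ (2 * s) = x (i, a) ^ (2 * s - 1) * x (i, a) := by
      rw [← pow_succ]; congr 1; omega
    have hprod : (∏ b ∈ Finset.univ.erase a, x (i, b)) * x (i, a) = P i :=
      Finset.prod_erase_mul _ _ (Finset.mem_univ a)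
    calc lam * x (i, a) ^ (2 * s)
        = (lam * x (i, a) ^ (2 * s - 1)) * x (i, a) := by rw [hpow]; ring
      _ = ((∏ b ∈ Finset.univ.erase a, x (i, b)) *
            ∑ j ∈ G.neighborFinset i, ∏ b : Fin s, x (j, b)) * x (i, a) := by rw [h]
      _ = P i * S i := by rw [← hprod]; ring
  have hSne : ∀ i, S i ≠ 0 := by
    intro i hSi
    have h := key i ⟨0, hs0⟩
    rw [hSi, mul_zero] at h
    exact (mul_ne_zero hlam (pow_ne_zero _ (hx _))) h
  have step4 : ∀ i, S i ^ s = lam ^ s * P i ^ s := by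
    intro i
    have h : ∏ a : Fin s, (lam * x (i, a) ^ (2 * s)) = ∏ _a : Fin s, (P i * S i) :=
      Finset.prod_congr rfl fun a _ => key i a
    simp only [Finset.prod_mul_distrib, Finset.prod_const, Finset.prod_pow,
      Finset.card_univ, Fintype.card_fin] at h
    rw [show (∏ x_1 : Fin s, x (i, x_1)) = P i from rfl] at h
    have hP2 : P i ^ (2 * s) = P i ^ s * P i ^ s := by rw [← pow_add]; congr 1; omega
    rw [hP2] at h
    have h2 : S i ^ s * P i ^ s = (lam ^ s * P i ^ s) * P i ^ s := by linear_combination -h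
    exact mul_right_cancel₀ (pow_ne_zero _ (hPne i)) h2
  have hsqrt : ∀ i, ∃ c : ℂ, c ^ 2 = lam * P i / S i := fun i =>
    IsAlgClosed.exists_pow_nat_eq _ (by norm_num)
  choose π hπ using hsqrt
  have hroot : ∀ i, π i ^ (2 * s) = 1 := by
    intro i
    rw [mul_comm 2 s, pow_mul', hπ i, div_pow, mul_pow, ← step4 i,
      div_self (pow_ne_zero _ (hSne i))]
  have hπne : ∀ i, π i ≠ 0 := by
    intro i h
    have := hroot i
    rw [h, zero_pow (by omega)] at this
    exact zero_ne_one this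
  refine ⟨π, hroot, fun i => ?_⟩
  have hsum : ∑ j ∈ G.neighborFinset i, π i * π j * (P j / π j) = π i * S i := by
    rw [hS, Finset.mul_sum]
    refine Finset.sum_congr rfl fun j _ => ?_
    field_simp
    rw [mul_right_comm (π i) (π j) (P j), mul_div_cancel_right₀ _ (hπne j)]
  rw [hsum]
  have h2 : π i ^ 2 * S i = lam * P i := by
    rw [hπ i, div_mul_cancel₀ _ (hSne i)]
  show lam * (P i / π i) = π i * S i
  rw [← mul_div_assoc, div_eq_iff (hπne i)]
  linear_combination -h2
end

section
/- Let G = (V,E) be a graph, s ≥ 2, and let Ĝ be an induced subgraph of G with a 2s-weighting π. If λ ≠ 0 is an eigenvalue of the matrix A(Ĝ_π), then λ is an eigenvalue of the s-blowup hypergraph G^[s]: explicitly, given an eigenvector y of A(Ĝ_π) and choices z_i with z_i^s = y_i, the vector x defined by x_{v_i} = π(i) z_i for one distinguished vertex v_i ∈ V_i, x_v = z_i for the other vertices of V_i (i ∈ V(Ĝ)), and x_v = 0 otherwise, is a nonzero eigenvector of G^[s] for λ. -/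
open Finset Matrix

theorem stmt_5 {V : Type*} [Fintype V] [DecidableEq V]
    (G : SimpleGraph V) [DecidableRel G.Adj] (s : ℕ) (hs : 2 ≤ s)
    (S : Finset V) (π : {i // i ∈ S} → ℂ) (hπ : ∀ i, π i ^ (2 * s) = 1)
    (lam : ℂ) (hlam : lam ≠ 0)
    (y : {i // i ∈ S} → ℂ) (hy : y ≠ 0)
    (heig : (Matrix.of fun i j : {i // i ∈ S} =>
        if G.Adj i j then π i * π j else 0).mulVec y = lam • y)
    (z : {i // i ∈ S} → ℂ) (hz : ∀ i, z i ^ s = y i)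
    (x : V × Fin s → ℂ)
    (hxS : ∀ (i : V) (h : i ∈ S) (a : Fin s),
      x (i, a) = if a = (⟨0, by omega⟩ : Fin s) then π ⟨i, h⟩ * z ⟨i, h⟩ else z ⟨i, h⟩)
    (hxout : ∀ i : V, i ∉ S → ∀ a : Fin s, x (i, a) = 0) :
    x ≠ 0 ∧ IsBlowupEig G s lam x := by
  classical
  have hs0 : 0 < s := by omega
  set a0 : Fin s := ⟨0, hs0⟩ with ha0
  have hxS' : ∀ (i : V) (h : i ∈ S) (a : Fin s),
      x (i, a) = if a = a0 then π ⟨i, h⟩ * z ⟨i, h⟩ else z ⟨i, h⟩ := hxS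
  have hπne : ∀ i, π i ≠ 0 := by
    intro i h
    have h2 := hπ i
    rw [h, zero_pow (by omega)] at h2
    exact zero_ne_one h2
  have hπinv : ∀ i, π i * π i ^ (2 * s - 1) = 1 := by
    intro i
    rw [← pow_succ', show 2 * s - 1 + 1 = 2 * s by omega, hπ]
  have prod_erase0 : ∀ (i : V) (h : i ∈ S),
      (∏ b ∈ Finset.univ.erase a0, x (i, b)) = z ⟨i, h⟩ ^ (s - 1) := by
    intro i h
    rw [Finset.prod_congr rfl (fun b hb =>
      by rw [hxS' i h b, if_neg (Finset.ne_of_mem_erase hb)]), Finset.prod_const]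
    congr 1
    rw [Finset.card_erase_of_mem (Finset.mem_univ a0)]
    simp
  have prod_full : ∀ (i : V) (h : i ∈ S),
      (∏ b : Fin s, x (i, b)) = π ⟨i, h⟩ * y ⟨i, h⟩ := by
    intro i h
    rw [← Finset.mul_prod_erase Finset.univ _ (Finset.mem_univ a0), prod_erase0 i h]
    have h1 : x (i, a0) = π ⟨i, h⟩ * z ⟨i, h⟩ := by rw [hxS' i h a0, if_pos rfl]
    rw [h1, ← hz, show s = 1 + (s - 1) by omega, pow_add, pow_one]
    ring_nf
    rw [show 1 + (s - 1) - 1 = s - 1 by omega]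
  have prod_erase1 : ∀ (i : V) (h : i ∈ S) (a : Fin s), a ≠ a0 →
      (∏ b ∈ Finset.univ.erase a, x (i, b)) = π ⟨i, h⟩ * z ⟨i, h⟩ ^ (s - 1) := by
    intro i h a ha
    have ha0mem : a0 ∈ Finset.univ.erase a := by
      simp [Finset.mem_erase, Ne.symm ha]
    rw [← Finset.mul_prod_erase _ _ ha0mem]
    have h1 : x (i, a0) = π ⟨i, h⟩ * z ⟨i, h⟩ := by rw [hxS' i h a0, if_pos rfl]
    have h2 : ∏ b ∈ (Finset.univ.erase a).erase a0, x (i, b) = z ⟨i, h⟩ ^ (s - 2) := by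
      rw [Finset.prod_congr rfl (fun b hb =>
        by rw [hxS' i h b, if_neg (Finset.ne_of_mem_erase hb)]), Finset.prod_const]
      congr 1
      rw [Finset.card_erase_of_mem ha0mem, Finset.card_erase_of_mem (Finset.mem_univ a)]
      simp
      omega
    rw [h1, h2, show s - 1 = 1 + (s - 2) by omega, pow_add, pow_one]
    ring
  -- the neighbor sum
  have hsum : ∀ (i : V) (h : i ∈ S),
      (∑ j ∈ G.neighborFinset i, ∏ b : Fin s, x (j, b)) =
        lam * y ⟨i, h⟩ * π ⟨i, h⟩ ^ (2 * s - 1) := by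
    intro i h
    set f : V → ℂ := fun j => ∏ b : Fin s, x (j, b) with hf
    have hzero : ∀ j, j ∉ S → f j = 0 := fun j hj =>
      Finset.prod_eq_zero (Finset.mem_univ a0) (hxout j hj a0)
    have step1 : (∑ j ∈ G.neighborFinset i, f j)
        = ∑ j ∈ S, (if G.Adj i j then f j else 0) := by
      rw [← Finset.sum_filter]
      rw [← Finset.sum_filter_of_ne (s := G.neighborFinset i) (f := f)
        (p := fun j => j ∈ S) (fun j _ hfj => by by_contra hjS; exact hfj (hzero j hjS))]
      apply Finset.sum_congr _ (fun _ _ => rfl)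
      ext j
      simp only [Finset.mem_filter, SimpleGraph.mem_neighborFinset]
      tauto
    have step2 : (∑ j ∈ S, (if G.Adj i j then f j else 0))
        = ∑ j : {j // j ∈ S}, (if G.Adj i j then π j * y j else 0) := by
      rw [Finset.univ_eq_attach, ← Finset.sum_attach S (fun j => if G.Adj i j then f j else 0)]
      refine Finset.sum_congr rfl (fun j _ => ?_)
      by_cases hadj : G.Adj i j.1
      · rw [if_pos hadj, if_pos hadj, hf]
        simpa using prod_full j.1 j.2
      · rw [if_neg hadj, if_neg hadj]
    have he := congrFun heig ⟨i, h⟩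
    simp only [Matrix.mulVec, dotProduct, Matrix.of_apply, Pi.smul_apply,
      smul_eq_mul] at he
    have he2 : π ⟨i, h⟩ * ∑ j : {j // j ∈ S}, (if G.Adj i j then π j * y j else 0)
        = lam * y ⟨i, h⟩ := by
      rw [Finset.mul_sum, ← he]
      refine Finset.sum_congr rfl (fun j _ => ?_)
      by_cases hadj : G.Adj (⟨i, h⟩ : {j // j ∈ S}).1 j.1
      · rw [if_pos hadj, if_pos hadj]; ring
      · rw [if_neg hadj, if_neg hadj]; ring
    rw [step1, step2]
    calc (∑ j : {j // j ∈ S}, (if G.Adj i j then π j * y j else 0))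
        = π ⟨i, h⟩ ^ (2 * s - 1) * (π ⟨i, h⟩ *
            ∑ j : {j // j ∈ S}, (if G.Adj i j then π j * y j else 0)) := by
          rw [← mul_assoc, mul_comm (π ⟨i, h⟩ ^ (2 * s - 1)), hπinv, one_mul]
      _ = lam * y ⟨i, h⟩ * π ⟨i, h⟩ ^ (2 * s - 1) := by rw [he2]; ring
  constructor
  · -- x ≠ 0
    obtain ⟨i, hi⟩ : ∃ i, y i ≠ 0 := Function.ne_iff.mp hy
    intro hx0
    apply hi
    have hb : (⟨1, by omega⟩ : Fin s) ≠ a0 := by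
      simp [ha0, Fin.ext_iff]
    have hzi : z i = 0 := by
      have h1 := congrFun hx0 (i.1, ⟨1, by omega⟩)
      rw [hxS' i.1 i.2 _, if_neg hb] at h1
      simpa using h1
    rw [← hz i, hzi, zero_pow (by omega)]
  · intro i a
    by_cases h : i ∈ S
    · rw [hsum i h, ← hz ⟨i, h⟩]
      by_cases ha : a = a0
      · subst ha
        rw [prod_erase0 i h, hxS' i h a0, if_pos rfl, mul_pow]
        rw [show 2 * s - 1 = (s - 1) + s by omega, pow_add]
        ring
      · rw [prod_erase1 i h a ha, hxS' i h a, if_neg ha]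
        have : π ⟨i, h⟩ * z ⟨i, h⟩ ^ (s - 1) * (lam * z ⟨i, h⟩ ^ s * π ⟨i, h⟩ ^ (2 * s - 1))
            = (π ⟨i, h⟩ * π ⟨i, h⟩ ^ (2 * s - 1)) * lam * (z ⟨i, h⟩ ^ (s - 1) * z ⟨i, h⟩ ^ s) := by
          ring
        rw [this, hπinv, one_mul, ← pow_add, show s - 1 + s = 2 * s - 1 by omega]
    · have h1 : x (i, a) = 0 := hxout i h a
      have h2 : (∏ b ∈ Finset.univ.erase a, x (i, b)) = 0 := by
        obtain ⟨b, hb⟩ : ∃ b, b ∈ Finset.univ.erase a := by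
          apply Finset.Nonempty.exists_mem
          rw [← Finset.card_pos, Finset.card_erase_of_mem (Finset.mem_univ a)]
          simp
          omega
        exact Finset.prod_eq_zero hb (hxout i h b)
      rw [h1, h2, zero_pow (by omega), mul_zero, zero_mul]
end

section
/- Let G be a graph and s ≥ 2. A complex number λ is an eigenvalue of the s-blowup G^[s] if and only if λ is an eigenvalue of A(Ĝ_π) for some induced subgraph Ĝ of G and some 2s-weighting π of Ĝ (mapping each vertex to a 2s-th root of unity). -/
open Finset Matrix

/-- Main theorem: `λ` is an eigenvalue of `G^[s]` iff it is an eigenvalue of some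
2s-weighted induced subgraph of `G`. -/
theorem stmt_6 {V : Type*} [Fintype V] [DecidableEq V]
    (G : SimpleGraph V) [DecidableRel G.Adj] (s : ℕ) (hs : 2 ≤ s) (lam : ℂ) :
    (∃ x : V × Fin s → ℂ, x ≠ 0 ∧ IsBlowupEig G s lam x) ↔
      ∃ S : Finset V, ∃ π : {i // i ∈ S} → ℂ, (∀ i, π i ^ (2 * s) = 1) ∧
        ∃ y : {i // i ∈ S} → ℂ, y ≠ 0 ∧
          (Matrix.of fun i j : {i // i ∈ S} =>
            if G.Adj i j then π i * π j else 0).mulVec y = lam • y := by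
  classical
  haveI : NeZero s := ⟨by omega⟩
  constructor
  · rintro ⟨x, hx, hE⟩
    by_cases hlam : lam = 0
    · -- λ = 0 : use a singleton subgraph
      obtain ⟨p, hp⟩ : ∃ p, x p ≠ 0 := by
        by_contra h; push_neg at h; exact hx (funext h)
      refine ⟨{p.1}, fun _ => 1, fun i => one_pow _, fun _ => 1, ?_, ?_⟩
      · intro h
        simpa using congrFun h ⟨p.1, Finset.mem_singleton_self _⟩
      · subst hlam
        funext i
        have hi : (i : V) = p.1 := Finset.mem_singleton.mp i.2
        have : ∑ j : {v // v ∈ ({p.1} : Finset V)},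
            (fun v : V => if G.Adj ↑i v then (1:ℂ) else 0) ↑j = 0 := by
          rw [Finset.sum_coe_sort ({p.1} : Finset V)
            (fun v : V => if G.Adj ↑i v then (1:ℂ) else 0)]
          simp [hi, Finset.filter_singleton]
        simpa [Matrix.mulVec, dotProduct] using this
    · -- λ ≠ 0 : main construction
      set P : V → ℂ := fun i => ∏ b : Fin s, x (i, b) with hP
      have key : ∀ (i : V) (b : Fin s),
          lam * x (i, b) ^ (2 * s) =
            P i * ∑ j ∈ G.neighborFinset i, P j := by
        intro i b
        have h := hE i b
        calc lam * x (i, b) ^ (2 * s)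
            = x (i, b) * (lam * x (i, b) ^ (2 * s - 1)) := by
              conv_lhs => rw [show 2 * s = 1 + (2 * s - 1) by omega]
              rw [pow_add, pow_one]; ring
          _ = x (i, b) * ((∏ c ∈ Finset.univ.erase b, x (i, c)) *
                ∑ j ∈ G.neighborFinset i, P j) := by rw [h]
          _ = P i * ∑ j ∈ G.neighborFinset i, P j := by
              rw [← mul_assoc,
                Finset.mul_prod_erase Finset.univ (fun c => x (i, c)) (Finset.mem_univ b)]
      have hzero : ∀ i a, x (i, (0:Fin s)) = 0 → x (i, a) = 0 := by
        intro i a h0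
        by_cases ha : a = 0
        · rwa [ha]
        · have h := hE i a
          have hprod : (∏ c ∈ Finset.univ.erase a, x (i, c)) = 0 :=
            Finset.prod_eq_zero (Finset.mem_erase.mpr ⟨Ne.symm ha, Finset.mem_univ _⟩) h0
          rw [hprod, zero_mul] at h
          rcases mul_eq_zero.mp h with h' | h'
          · exact absurd h' hlam
          · exact pow_eq_zero_iff (by omega) |>.mp h'
      set S := Finset.univ.filter (fun i => x (i, (0:Fin s)) ≠ 0) with hS
      have hmemS : ∀ i, i ∈ S ↔ x (i, (0:Fin s)) ≠ 0 := by
        intro i; simp [hS]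
      have hpow : ∀ i (b : Fin s),
          x (i, b) ^ (2 * s) = x (i, (0:Fin s)) ^ (2 * s) := by
        intro i b
        exact mul_left_cancel₀ hlam ((key i b).trans (key i 0).symm)
      have hPzero : ∀ j, j ∉ S → P j = 0 := by
        intro j hj
        have h0 : x (j, (0:Fin s)) = 0 := by
          by_contra h; exact hj ((hmemS j).mpr h)
        exact Finset.prod_eq_zero (Finset.mem_univ (0:Fin s)) h0
      refine ⟨S, fun I => P I.1 / (x (I.1, 0)) ^ s, ?_, fun I => (x (I.1, 0)) ^ s, ?_, ?_⟩
      · rintro ⟨i, hi⟩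
        have hx0 : x (i, (0:Fin s)) ≠ 0 := (hmemS i).mp hi
        have hPpow : P i ^ (2*s) = ((x (i, (0:Fin s))) ^ s) ^ (2*s) := by
          have h1 : P i ^ (2*s) = ∏ b : Fin s, x (i,b) ^ (2*s) := by
            rw [hP]; exact (Finset.prod_pow _ _ _).symm
          rw [h1, Finset.prod_congr rfl (fun b _ => hpow i b), Finset.prod_const,
            Finset.card_univ, Fintype.card_fin, ← pow_mul, ← pow_mul, Nat.mul_comm]
        have hden : ((x (i, (0:Fin s))) ^ s) ^ (2*s) ≠ 0 :=
          pow_ne_zero _ (pow_ne_zero _ hx0)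
        rw [div_pow, hPpow, div_self hden]
      · obtain ⟨p, hp⟩ : ∃ p, x p ≠ 0 := by
          by_contra h; push_neg at h; exact hx (funext h)
        have hx0 : x (p.1, (0:Fin s)) ≠ 0 := by
          intro h
          exact hp (by simpa using hzero p.1 p.2 h)
        intro h
        have := congrFun h ⟨p.1, (hmemS p.1).mpr hx0⟩
        simp only [Pi.zero_apply] at this
        exact pow_ne_zero s hx0 this
      · funext I
        obtain ⟨i, hi⟩ := I
        have hx0 : x (i, (0:Fin s)) ≠ 0 := (hmemS i).mp hi
        have hu : (x (i, (0:Fin s))) ^ s ≠ 0 := pow_ne_zero _ hx0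
        simp only [Matrix.mulVec, dotProduct, Matrix.of_apply, Pi.smul_apply, smul_eq_mul]
        have e1 : ∀ J : {v // v ∈ S},
            (if G.Adj i ↑J then P i / (x (i,0))^s * (P (↑J:V) / (x ((↑J:V),0))^s) else 0)
              * (x ((↑J:V),0))^s
            = (P i / (x (i,0))^s) * (fun v : V => if G.Adj i v then P v else 0) ↑J := by
          rintro ⟨j, hj⟩
          have huj : (x (j, (0:Fin s))) ^ s ≠ 0 := pow_ne_zero _ ((hmemS j).mp hj)
          simp only []
          by_cases hadj : G.Adj i j
          · rw [if_pos hadj, if_pos hadj]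
            field_simp
          · rw [if_neg hadj, if_neg hadj, zero_mul, mul_zero]
        calc ∑ J : {v // v ∈ S},
              (if G.Adj i ↑J then P i / (x (i,0))^s * (P (↑J:V) / (x ((↑J:V),0))^s) else 0)
                * (x ((↑J:V),0))^s
            = ∑ J : {v // v ∈ S},
              (P i / (x (i,0))^s) * (fun v : V => if G.Adj i v then P v else 0) ↑J :=
              Finset.sum_congr rfl (fun J _ => e1 J)
          _ = (P i / (x (i,0))^s) * ∑ J : {v // v ∈ S},
              (fun v : V => if G.Adj i v then P v else 0) ↑J := by rw [Finset.mul_sum]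
          _ = (P i / (x (i,0))^s) * ∑ j ∈ G.neighborFinset i, P j := by
              rw [Finset.sum_coe_sort S (fun v : V => if G.Adj i v then P v else 0),
                Finset.sum_subset (Finset.subset_univ S)
                  (fun j _ hj => by simp [hPzero j hj]),
                SimpleGraph.neighborFinset_eq_filter, Finset.sum_filter]
          _ = lam * (x (i,0))^s := by
              rw [div_mul_eq_mul_div, ← key i 0,
                show 2 * s = s + s by omega, pow_add]
              field_simp
  · -- reverse direction
    rintro ⟨S, π, hπ, y, hy, hE⟩
    have hπne : ∀ I, π I ≠ 0 := by
      intro I h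
      have h1 := hπ I
      rw [h, zero_pow (by omega : 2*s ≠ 0)] at h1
      exact zero_ne_one h1
    choose w hw using fun I : {i // i ∈ S} =>
      IsAlgClosed.exists_pow_nat_eq (y I) (n := s) (by omega)
    set x : V × Fin s → ℂ := fun p =>
      if h : p.1 ∈ S then (if p.2 = 0 then π ⟨p.1, h⟩ else 1) * w ⟨p.1, h⟩ else 0 with hxdef
    have hxval : ∀ (i : V) (h : i ∈ S) (a : Fin s),
        x (i, a) = (if a = 0 then π ⟨i, h⟩ else 1) * w ⟨i, h⟩ := by
      intro i h a; rw [hxdef]; simp only [dif_pos h]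
    have hxval0 : ∀ (i : V), i ∉ S → ∀ a, x (i, a) = 0 := by
      intro i h a; rw [hxdef]; simp only [dif_neg h]
    have hProd : ∀ (j : V) (h : j ∈ S),
        (∏ b : Fin s, x (j, b)) = π ⟨j, h⟩ * y ⟨j, h⟩ := by
      intro j h
      calc (∏ b : Fin s, x (j, b))
          = ∏ b : Fin s, (if b = 0 then π ⟨j, h⟩ else 1) * w ⟨j, h⟩ :=
            Finset.prod_congr rfl (fun b _ => hxval j h b)
        _ = (∏ b : Fin s, (if b = 0 then π ⟨j, h⟩ else 1)) * w ⟨j, h⟩ ^ s := by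
            rw [Finset.prod_mul_distrib, Finset.prod_const, Finset.card_univ,
              Fintype.card_fin]
        _ = π ⟨j, h⟩ * y ⟨j, h⟩ := by
            rw [Finset.prod_ite_eq' Finset.univ (0 : Fin s) (fun _ => π ⟨j, h⟩),
              if_pos (Finset.mem_univ _), hw]
    have hProd0 : ∀ (j : V), j ∉ S → (∏ b : Fin s, x (j, b)) = 0 := by
      intro j h
      exact Finset.prod_eq_zero (Finset.mem_univ (0 : Fin s)) (hxval0 j h 0)
    have hF : ∀ j : V, (∏ b : Fin s, x (j, b)) =
        (fun v : V => if h : v ∈ S then π ⟨v, h⟩ * y ⟨v, h⟩ else 0) j := by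
      intro j
      by_cases h : j ∈ S
      · rw [hProd j h]; simp [h]
      · rw [hProd0 j h]; simp [h]
    have hsum : ∀ (i : V) (hi : i ∈ S),
        π ⟨i, hi⟩ * ∑ j ∈ G.neighborFinset i, (∏ b : Fin s, x (j, b))
          = lam * y ⟨i, hi⟩ := by
      intro i hi
      have h1 := congrFun hE ⟨i, hi⟩
      simp only [Matrix.mulVec, dotProduct, Matrix.of_apply, Pi.smul_apply,
        smul_eq_mul] at h1
      have e2 : ∀ J : {v // v ∈ S},
          (if G.Adj (i : V) (↑J : V) then π ⟨i, hi⟩ * π J else 0) * y J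
          = π ⟨i, hi⟩ * (fun v : V => if G.Adj i v then
              (if h : v ∈ S then π ⟨v, h⟩ * y ⟨v, h⟩ else 0) else 0) ↑J := by
        intro J
        simp only []
        by_cases hadj : G.Adj i (↑J : V)
        · rw [if_pos hadj, if_pos hadj, dif_pos J.2, Subtype.coe_eta]; ring
        · rw [if_neg hadj, if_neg hadj, zero_mul, mul_zero]
      rw [Finset.sum_congr rfl (fun J _ => e2 J), ← Finset.mul_sum,
        Finset.sum_coe_sort S (fun v : V => if G.Adj i v then
          (if h : v ∈ S then π ⟨v, h⟩ * y ⟨v, h⟩ else 0) else 0),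
        Finset.sum_subset (Finset.subset_univ S) (fun j _ hj => by simp [hj]),
        ← Finset.sum_filter, ← SimpleGraph.neighborFinset_eq_filter,
        Finset.sum_congr rfl (fun j _ => (hF j).symm)] at h1
      exact h1
    refine ⟨x, ?_, ?_⟩
    · obtain ⟨I, hI⟩ : ∃ I, y I ≠ 0 := by
        by_contra h; push_neg at h; exact hy (funext h)
      have hwI : w I ≠ 0 := by
        intro h; apply hI; rw [← hw I, h, zero_pow (by omega : s ≠ 0)]
      intro h
      have := congrFun h ((↑I : V), (0 : Fin s))
      rw [hxval ↑I I.2 0, if_pos rfl, Subtype.coe_eta, Pi.zero_apply] at this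
      exact mul_ne_zero (hπne I) hwI this
    · intro i a
      by_cases hi : i ∈ S
      · have hSig : ∑ j ∈ G.neighborFinset i, (∏ b : Fin s, x (j, b))
            = lam * y ⟨i, hi⟩ / π ⟨i, hi⟩ := by
          rw [eq_div_iff (hπne _), mul_comm _ (π ⟨i,hi⟩), hsum i hi]
        have hπinv : (π ⟨i, hi⟩)⁻¹ = π ⟨i, hi⟩ ^ (2*s - 1) := by
          apply inv_eq_of_mul_eq_one_right
          rw [← pow_succ', show 2*s - 1 + 1 = 2*s by omega]
          exact hπ ⟨i, hi⟩
        have hww : w ⟨i,hi⟩ ^ (s-1) * w ⟨i,hi⟩ ^ s = w ⟨i,hi⟩ ^ (2*s-1) := by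
          rw [← pow_add]; congr 1; omega
        by_cases ha : a = 0
        · subst ha
          rw [hxval i hi 0, if_pos rfl, hSig]
          have hprod : ∏ b ∈ Finset.univ.erase (0:Fin s), x (i, b)
              = w ⟨i, hi⟩ ^ (s - 1) := by
            rw [Finset.prod_congr rfl (fun b hb => by
              rw [hxval i hi b, if_neg (Finset.mem_erase.mp hb).1, one_mul]),
              Finset.prod_const, Finset.card_erase_of_mem (Finset.mem_univ _),
              Finset.card_univ, Fintype.card_fin]
          rw [hprod, div_eq_mul_inv, hπinv, ← hw ⟨i,hi⟩, mul_pow]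
          calc lam * (π ⟨i,hi⟩ ^ (2*s-1) * w ⟨i,hi⟩ ^ (2*s-1))
              = lam * π ⟨i,hi⟩ ^ (2*s-1) * (w ⟨i,hi⟩ ^ (s-1) * w ⟨i,hi⟩ ^ s) := by
                rw [hww]; ring
            _ = w ⟨i,hi⟩ ^ (s-1) * (lam * w ⟨i,hi⟩ ^ s * π ⟨i,hi⟩ ^ (2*s-1)) := by ring
        · rw [hxval i hi a, if_neg ha, one_mul, hSig]
          have hprod : ∏ b ∈ Finset.univ.erase a, x (i, b)
              = π ⟨i, hi⟩ * w ⟨i, hi⟩ ^ (s - 1) := by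
            calc ∏ b ∈ Finset.univ.erase a, x (i, b)
                = ∏ b ∈ Finset.univ.erase a,
                    (if b = 0 then π ⟨i, hi⟩ else 1) * w ⟨i, hi⟩ :=
                  Finset.prod_congr rfl (fun b _ => hxval i hi b)
              _ = (∏ b ∈ Finset.univ.erase a, (if b = 0 then π ⟨i, hi⟩ else 1))
                    * w ⟨i, hi⟩ ^ (s - 1) := by
                  rw [Finset.prod_mul_distrib, Finset.prod_const,
                    Finset.card_erase_of_mem (Finset.mem_univ _),
                    Finset.card_univ, Fintype.card_fin]
              _ = π ⟨i, hi⟩ * w ⟨i, hi⟩ ^ (s - 1) := by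
                  rw [Finset.prod_ite_eq' (Finset.univ.erase a) (0 : Fin s)
                      (fun _ => π ⟨i, hi⟩),
                    if_pos (Finset.mem_erase.mpr ⟨Ne.symm ha, Finset.mem_univ _⟩)]
          rw [hprod, ← hw ⟨i,hi⟩]
          rw [show π ⟨i,hi⟩ * w ⟨i,hi⟩ ^ (s-1) * (lam * w ⟨i,hi⟩ ^ s / π ⟨i,hi⟩)
              = lam * (w ⟨i,hi⟩ ^ (s-1) * w ⟨i,hi⟩ ^ s) * (π ⟨i,hi⟩ / π ⟨i,hi⟩) from by ring,
            div_self (hπne _), mul_one, hww]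
      · obtain ⟨b, hb, hba⟩ : ∃ b ∈ Finset.univ.erase a, True := by
          have hcard : 1 ≤ (Finset.univ.erase a).card := by
            rw [Finset.card_erase_of_mem (Finset.mem_univ _), Finset.card_univ,
              Fintype.card_fin]
            omega
          have hne : (Finset.univ.erase a : Finset (Fin s)).Nonempty :=
            Finset.card_pos.mp (by omega)
          obtain ⟨b, hb⟩ := hne
          exact ⟨b, hb, trivial⟩
        rw [hxval0 i hi a, Finset.prod_eq_zero hb (hxval0 i hi b),
          zero_mul, zero_pow (by omega : 2*s - 1 ≠ 0), mul_zero]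
end

section
/- Let G be a graph with adjacency spectral radius ρ(G), and let s ≥ 2. The spectral radius of the s-blowup hypergraph G^[s] (the maximum modulus of its eigenvalues) equals ρ(G). -/
open Finset Matrix

set_option linter.unusedSectionVars false

section Aux

variable {V : Type*} [Fintype V] [DecidableEq V] [Nonempty V]
  (G : SimpleGraph V) [DecidableRel G.Adj]

/-- The complex adjacency matrix of `G`. -/
noncomputable def adjC : Matrix V V ℂ :=
  Matrix.of fun i j : V => if G.Adj i j then (1 : ℂ) else 0

lemma adjC_mulVec (u : V → ℂ) (i : V) :
    (adjC G *ᵥ u) i = ∑ j ∈ G.neighborFinset i, u j := by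
  rw [SimpleGraph.neighborFinset_eq_filter, Finset.sum_filter]
  simp [adjC, mulVec, dotProduct, ite_mul]

lemma adjC_isHermitian : (adjC G).IsHermitian := by
  ext i j
  simp only [adjC, conjTranspose_apply, of_apply]
  by_cases h : G.Adj j i
  · rw [if_pos h, if_pos ((G.adj_comm j i).1 h), star_one]
  · rw [if_neg h, if_neg fun hh => h ((G.adj_comm i j).1 hh), star_zero]

/-- The top of the Rayleigh quotient of the adjacency operator. -/
noncomputable def lmax : ℝ :=
  ⨆ x : { x : EuclideanSpace ℂ V // x ≠ 0 },
    RCLike.re (inner ℂ ((Matrix.toEuclideanLin (adjC G)) (x : EuclideanSpace ℂ V))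
      (x : EuclideanSpace ℂ V) : ℂ) / ‖(x : EuclideanSpace ℂ V)‖ ^ 2

lemma toEuclideanLin_adjC_apply (u : EuclideanSpace ℂ V) (i : V) :
    (Matrix.toEuclideanLin (adjC G)) u i = ∑ j ∈ G.neighborFinset i, u j := by
  rw [Matrix.toEuclideanLin_apply]
  exact adjC_mulVec G _ i

lemma lmax_hasEigenvalue :
    Module.End.HasEigenvalue (Matrix.toEuclideanLin (adjC G)) ((lmax G : ℝ) : ℂ) :=
  LinearMap.IsSymmetric.hasEigenvalue_iSup_of_finiteDimensional
    (Matrix.isHermitian_iff_isSymmetric.1 (adjC_isHermitian G))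

lemma rayleigh_bddAbove :
    BddAbove (Set.range fun x : { x : EuclideanSpace ℂ V // x ≠ 0 } =>
      RCLike.re (inner ℂ ((Matrix.toEuclideanLin (adjC G)) (x : EuclideanSpace ℂ V))
        (x : EuclideanSpace ℂ V) : ℂ) / ‖(x : EuclideanSpace ℂ V)‖ ^ 2) := by
  set T := Matrix.toEuclideanLin (adjC G)
  set Tc := LinearMap.toContinuousLinearMap T with hTc
  refine ⟨‖Tc‖, ?_⟩
  rintro r ⟨x, rfl⟩
  have hx : (0 : ℝ) < ‖(x : EuclideanSpace ℂ V)‖ := norm_pos_iff.2 x.2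
  rw [div_le_iff₀ (by positivity)]
  calc RCLike.re (inner ℂ (T (x : EuclideanSpace ℂ V)) (x : EuclideanSpace ℂ V) : ℂ)
      ≤ ‖(inner ℂ (T (x : EuclideanSpace ℂ V)) (x : EuclideanSpace ℂ V) : ℂ)‖ :=
        RCLike.re_le_norm _
    _ ≤ ‖T (x : EuclideanSpace ℂ V)‖ * ‖(x : EuclideanSpace ℂ V)‖ :=
        norm_inner_le_norm _ _
    _ ≤ (‖Tc‖ * ‖(x : EuclideanSpace ℂ V)‖) * ‖(x : EuclideanSpace ℂ V)‖ := by
        refine mul_le_mul_of_nonneg_right ?_ (norm_nonneg _)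
        have := Tc.le_opNorm (x : EuclideanSpace ℂ V)
        rwa [hTc, LinearMap.coe_toContinuousLinearMap'] at this
    _ = ‖Tc‖ * ‖(x : EuclideanSpace ℂ V)‖ ^ 2 := by ring

/-- Subinvariance implies a bound by the Rayleigh top. -/
lemma le_lmax (w : V → ℝ) (hw0 : ∀ i, 0 ≤ w i) (hw : w ≠ 0) (r : ℝ)
    (h : ∀ i, r * w i ≤ ∑ j ∈ G.neighborFinset i, w j) : r ≤ lmax G := by
  set T := Matrix.toEuclideanLin (adjC G) with hT
  let W : EuclideanSpace ℂ V := WithLp.toLp 2 (fun i => (w i : ℂ))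
  have hWapp : ∀ i, W i = (w i : ℂ) := fun _ => rfl
  have hWne : W ≠ 0 := by
    intro h0
    apply hw
    funext i
    have := congrArg (fun f : EuclideanSpace ℂ V => f i) h0
    simpa [hWapp] using congrArg Complex.re this
  have hTW : ∀ i, T W i = ((∑ j ∈ G.neighborFinset i, w j : ℝ) : ℂ) := by
    intro i
    rw [hT, toEuclideanLin_adjC_apply]
    push_cast
    rfl
  have hinner : RCLike.re (inner ℂ (T W) W : ℂ) =
      ∑ i, (∑ j ∈ G.neighborFinset i, w j) * w i := by
    rw [PiLp.inner_apply]
    rw [map_sum]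
    refine Finset.sum_congr rfl fun i _ => ?_
    rw [RCLike.inner_apply, hTW i, hWapp i]
    simp [← Complex.ofReal_mul]
    ring
  have hnorm : ‖W‖ ^ 2 = ∑ i, w i ^ 2 := by
    rw [EuclideanSpace.norm_eq, Real.sq_sqrt (by positivity)]
    refine Finset.sum_congr rfl fun i _ => ?_
    rw [hWapp i, Complex.norm_real, Real.norm_eq_abs, sq_abs]
  have hS : (0 : ℝ) < ∑ i, w i ^ 2 := by
    obtain ⟨i, hi⟩ := Function.ne_iff.1 hw
    have hi' : w i ≠ 0 := hi
    refine Finset.sum_pos' (fun j _ => sq_nonneg _) ⟨i, Finset.mem_univ i, ?_⟩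
    positivity
  have h1 : r * (∑ i, w i ^ 2) ≤ RCLike.re (inner ℂ (T W) W : ℂ) := by
    rw [hinner, Finset.mul_sum]
    refine Finset.sum_le_sum fun i _ => ?_
    have := mul_le_mul_of_nonneg_right (h i) (hw0 i)
    calc r * w i ^ 2 = r * w i * w i := by ring
      _ ≤ (∑ j ∈ G.neighborFinset i, w j) * w i := this
  have hle : RCLike.re (inner ℂ (T W) W : ℂ) / ‖W‖ ^ 2 ≤ lmax G :=
    le_ciSup (rayleigh_bddAbove G) ⟨W, hWne⟩
  rw [hnorm] at hle
  calc r ≤ RCLike.re (inner ℂ (T W) W : ℂ) / (∑ i, w i ^ 2) := (le_div_iff₀ hS).2 (by linarith)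
    _ ≤ lmax G := hle

lemma lmax_nonneg : 0 ≤ lmax G := by
  refine le_lmax G (fun _ => 1) (fun _ => zero_le_one)
    (Function.ne_iff.2 ⟨Classical.arbitrary V, one_ne_zero⟩) 0 fun i => ?_
  rw [zero_mul]
  exact Finset.sum_nonneg fun j _ => zero_le_one

lemma spectrum_vec (mu : ℂ) (h : mu ∈ spectrum ℂ (adjC G)) :
    ∃ v : V → ℂ, v ≠ 0 ∧ ∀ i, ∑ j ∈ G.neighborFinset i, v j = mu * v i := by
  rw [← Matrix.spectrum_toEuclideanLin (A := adjC G)] at h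
  have hE : Module.End.HasEigenvalue (Matrix.toEuclideanLin (adjC G)) mu :=
    Module.End.hasEigenvalue_iff_mem_spectrum.2 h
  obtain ⟨u, hu⟩ := hE.exists_hasEigenvector
  refine ⟨fun i => u i, ?_, ?_⟩
  · intro h0
    exact hu.2 (by ext i; exact congrFun h0 i)
  · intro i
    have h1 : (Matrix.toEuclideanLin (adjC G)) u = mu • u := hu.apply_eq_smul
    have h2 := congrFun (congrArg (fun f : EuclideanSpace ℂ V => (f : V → ℂ)) h1) i
    rw [← toEuclideanLin_adjC_apply G u i]
    exact h2

lemma norm_spec_le_lmax (mu : ℂ) (h : mu ∈ spectrum ℂ (adjC G)) : ‖mu‖ ≤ lmax G := by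
  obtain ⟨v, hv, hev⟩ := spectrum_vec G mu h
  refine le_lmax G (fun i => ‖v i‖) (fun i => norm_nonneg _) ?_ ‖mu‖ fun i => ?_
  · intro h0
    apply hv
    funext i
    have := congrFun h0 i
    simpa using this
  · calc ‖mu‖ * ‖v i‖ = ‖mu * v i‖ := (norm_mul _ _).symm
      _ = ‖∑ j ∈ G.neighborFinset i, v j‖ := by rw [hev i]
      _ ≤ ∑ j ∈ G.neighborFinset i, ‖v j‖ := norm_sum_le _ _

/-- Construction of a blowup eigenpair from a graph eigenpair. -/
lemma construct_blowup (s : ℕ) (hs : 2 ≤ s) (mu : ℂ) (v : V → ℂ) (hv : v ≠ 0)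
    (hev : ∀ i, ∑ j ∈ G.neighborFinset i, v j = mu * v i) :
    ∃ x : V × Fin s → ℂ, x ≠ 0 ∧ IsBlowupEig G s mu x := by
  choose y hy using fun i => IsAlgClosed.exists_pow_nat_eq (v i) (n := s) (by omega)
  refine ⟨fun p => y p.1, ?_, ?_⟩
  · obtain ⟨i, hi⟩ := Function.ne_iff.1 hv
    have hi' : v i ≠ 0 := hi
    have hyi : y i ≠ 0 := by
      intro h0
      exact hi' (by rw [← hy i, h0, zero_pow (by omega)])
    intro h0
    exact hyi (congrFun h0 (i, ⟨0, by omega⟩))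
  · intro i a
    have h1 : ∏ b ∈ Finset.univ.erase a, y i = y i ^ (s - 1) := by
      rw [Finset.prod_const, Finset.card_erase_of_mem (Finset.mem_univ a),
        Finset.card_univ, Fintype.card_fin]
    have h2 : ∀ j, (∏ _b : Fin s, y j) = v j := fun j => by
      rw [Finset.prod_const, Finset.card_univ, Fintype.card_fin, hy]
    have h3 : ∑ j ∈ G.neighborFinset i, (∏ _b : Fin s, y j) = mu * y i ^ s := by
      rw [Finset.sum_congr rfl fun j _ => h2 j, hev i, hy i]
    simp only
    rw [h1, h3, show 2 * s - 1 = (s - 1) + s by omega, pow_add]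
    ring

/-- Any blowup eigenvalue is bounded by the Rayleigh top. -/
lemma blowup_le_lmax (s : ℕ) (hs : 2 ≤ s) (lam : ℂ) (x : V × Fin s → ℂ) (hx : x ≠ 0)
    (heig : IsBlowupEig G s lam x) : ‖lam‖ ≤ lmax G := by
  set z : V → ℂ := fun i => ∏ b : Fin s, x (i, b) with hz
  by_cases hz0 : z = 0
  · obtain ⟨⟨i, a⟩, hxa⟩ := Function.ne_iff.1 hx
    have key := heig i a
    have hsum : ∑ j ∈ G.neighborFinset i, ∏ b : Fin s, x (j, b) = 0 :=
      Finset.sum_eq_zero fun j _ => congrFun hz0 j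
    rw [hsum, mul_zero] at key
    have hxa' : x (i, a) ≠ 0 := hxa
    have hlam : lam = 0 := by
      rcases mul_eq_zero.1 key with h | h
      · exact h
      · exact absurd ((pow_eq_zero_iff (n := 2 * s - 1) (by omega)).1 h) hxa'
    rw [hlam, norm_zero]
    exact lmax_nonneg G
  · refine le_lmax G (fun i => ‖z i‖) (fun i => norm_nonneg _) ?_ ‖lam‖ fun i => ?_
    · intro h0
      apply hz0
      funext i
      simpa using congrFun h0 i
    · show ‖lam‖ * ‖z i‖ ≤ ∑ j ∈ G.neighborFinset i, ‖z j‖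
      by_cases hzi : z i = 0
      · rw [hzi, norm_zero, mul_zero]
        exact Finset.sum_nonneg fun j _ => norm_nonneg _
      · set S := ∑ j ∈ G.neighborFinset i, ∏ b : Fin s, x (j, b) with hS
        have hprod : ∏ a : Fin s, (lam * x (i, a) ^ (2 * s - 1)) =
            ∏ a : Fin s, ((∏ b ∈ Finset.univ.erase a, x (i, b)) * S) :=
          Finset.prod_congr rfl fun a _ => heig i a
        have hL : ∏ a : Fin s, (lam * x (i, a) ^ (2 * s - 1)) =
            lam ^ s * z i ^ (2 * s - 1) := by
          rw [Finset.prod_mul_distrib, Finset.prod_const, Finset.card_univ, Fintype.card_fin,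
            Finset.prod_pow]
        have hswap : ∏ a : Fin s, ∏ b ∈ Finset.univ.erase a, x (i, b) = z i ^ (s - 1) := by
          rw [Finset.prod_comm' (t' := Finset.univ) (s' := fun b => Finset.univ.erase b)
            (by intro a b; simp [ne_comm])]
          have : ∀ b : Fin s, ∏ _a ∈ Finset.univ.erase b, x (i, b) = x (i, b) ^ (s - 1) := by
            intro b
            rw [Finset.prod_const, Finset.card_erase_of_mem (Finset.mem_univ b),
              Finset.card_univ, Fintype.card_fin]
          rw [Finset.prod_congr rfl fun b _ => this b, Finset.prod_pow]
        have hR : ∏ a : Fin s, ((∏ b ∈ Finset.univ.erase a, x (i, b)) * S) =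
            z i ^ (s - 1) * S ^ s := by
          rw [Finset.prod_mul_distrib, hswap, Finset.prod_const, Finset.card_univ,
            Fintype.card_fin]
        have key : lam ^ s * z i ^ (2 * s - 1) = z i ^ (s - 1) * S ^ s := by
          rw [← hL, ← hR]; exact hprod
        rw [show 2 * s - 1 = (s - 1) + s by omega, pow_add] at key
        have key2 : (lam * z i) ^ s = S ^ s := by
          have h4 : z i ^ (s - 1) * (lam ^ s * z i ^ s) = z i ^ (s - 1) * S ^ s := by
            linear_combination key
          have h5 := mul_left_cancel₀ (pow_ne_zero (s - 1) hzi) h4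
          rw [mul_pow]
          exact h5
        have key3 : ‖lam * z i‖ ^ s = ‖S‖ ^ s := by
          rw [← norm_pow, ← norm_pow, key2]
        have key4 : ‖lam * z i‖ = ‖S‖ := by
          have hsne : s ≠ 0 := by omega
          refine le_antisymm ?_ ?_
          · exact (pow_le_pow_iff_left₀ (norm_nonneg _) (norm_nonneg _) hsne).1 key3.le
          · exact (pow_le_pow_iff_left₀ (norm_nonneg _) (norm_nonneg _) hsne).1 key3.ge
        calc ‖lam‖ * ‖z i‖ = ‖lam * z i‖ := (norm_mul _ _).symm
          _ = ‖S‖ := key4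
          _ ≤ ∑ j ∈ G.neighborFinset i, ‖z j‖ := norm_sum_le _ _

end Aux

/-- The spectral radius of `G^[s]` equals the adjacency spectral radius of `G`. -/
theorem stmt_7 {V : Type*} [Fintype V] [DecidableEq V] [Nonempty V]
    (G : SimpleGraph V) [DecidableRel G.Adj] (s : ℕ) (hs : 2 ≤ s) :
    sSup {r : ℝ | ∃ lam : ℂ, (∃ x : V × Fin s → ℂ, x ≠ 0 ∧ IsBlowupEig G s lam x) ∧
        r = ‖lam‖} =
      sSup {r : ℝ | ∃ mu ∈ spectrum ℂ
        (Matrix.of fun i j : V => if G.Adj i j then (1 : ℂ) else 0), r = ‖mu‖} := by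
  show sSup _ = sSup {r : ℝ | ∃ mu ∈ spectrum ℂ (adjC G), r = ‖mu‖}
  set SL := {r : ℝ | ∃ lam : ℂ, (∃ x : V × Fin s → ℂ, x ≠ 0 ∧ IsBlowupEig G s lam x) ∧
      r = ‖lam‖} with hSL
  set SR := {r : ℝ | ∃ mu ∈ spectrum ℂ (adjC G), r = ‖mu‖} with hSR
  have hnormlmax : ‖((lmax G : ℝ) : ℂ)‖ = lmax G := by
    rw [Complex.norm_real, Real.norm_eq_abs, abs_of_nonneg (lmax_nonneg G)]
  have hmemspec : ((lmax G : ℝ) : ℂ) ∈ spectrum ℂ (adjC G) := by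
    rw [← Matrix.spectrum_toEuclideanLin (A := adjC G)]
    exact (lmax_hasEigenvalue G).mem_spectrum
  have hubR : ∀ r ∈ SR, r ≤ lmax G := by
    rintro r ⟨mu, hmu, rfl⟩
    exact norm_spec_le_lmax G mu hmu
  have hubL : ∀ r ∈ SL, r ≤ lmax G := by
    rintro r ⟨lam, ⟨x, hx, heig⟩, rfl⟩
    exact blowup_le_lmax G s hs lam x hx heig
  have hmemR : lmax G ∈ SR := ⟨_, hmemspec, hnormlmax.symm⟩
  have hmemL : lmax G ∈ SL := by
    obtain ⟨v, hv, hev⟩ := spectrum_vec G _ hmemspec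
    obtain ⟨x, hx, heig⟩ := construct_blowup G s hs _ v hv hev
    exact ⟨_, ⟨x, hx, heig⟩, hnormlmax.symm⟩
  have h1 : sSup SL = lmax G :=
    le_antisymm (csSup_le ⟨_, hmemL⟩ hubL) (le_csSup ⟨_, hubL⟩ hmemL)
  have h2 : sSup SR = lmax G :=
    le_antisymm (csSup_le ⟨_, hmemR⟩ hubR) (le_csSup ⟨_, hubR⟩ hmemR)
  rw [h1, h2]
end

section
/- The set of eigenvalues of the 2-blowup K₃^[2] (a 4-uniform hypergraph on 6 vertices with three hyperedges, each the union of two blowup classes) is exactly {0, 1, −1, i, −i, 2, −2, (1 ± √7 i)/2, (−1 ± √7 i)/2}. -/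
open Finset Complex

/-- Eigen-equation for the 2-blowup `K₃^[2]`, the 4-uniform hypergraph with vertex
classes `{i} × Fin 2` for `i : Fin 3` and hyperedges the unions of two classes. -/
def IsK3BlowupEig (lam : ℂ) (x : Fin 3 × Fin 2 → ℂ) : Prop :=
  ∀ (i : Fin 3) (a : Fin 2),
    lam * x (i, a) ^ 3 =
      (∏ b ∈ Finset.univ.erase a, x (i, b)) *
        ∑ j ∈ Finset.univ.erase i, ∏ b : Fin 2, x (j, b)

lemma eig_iff (lam : ℂ) (x : Fin 3 × Fin 2 → ℂ) :
    IsK3BlowupEig lam x ↔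
      (lam * x (0,0)^3 = x (0,1) * (x (1,0)*x (1,1) + x (2,0)*x (2,1))) ∧
      (lam * x (0,1)^3 = x (0,0) * (x (1,0)*x (1,1) + x (2,0)*x (2,1))) ∧
      (lam * x (1,0)^3 = x (1,1) * (x (0,0)*x (0,1) + x (2,0)*x (2,1))) ∧
      (lam * x (1,1)^3 = x (1,0) * (x (0,0)*x (0,1) + x (2,0)*x (2,1))) ∧
      (lam * x (2,0)^3 = x (2,1) * (x (0,0)*x (0,1) + x (1,0)*x (1,1))) ∧
      (lam * x (2,1)^3 = x (2,0) * (x (0,0)*x (0,1) + x (1,0)*x (1,1))) := by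
  have e0 : (Finset.univ.erase (0 : Fin 2)) = {1} := by decide
  have e1 : (Finset.univ.erase (1 : Fin 2)) = {0} := by decide
  have f0 : (Finset.univ.erase (0 : Fin 3)) = {1, 2} := by decide
  have f1 : (Finset.univ.erase (1 : Fin 3)) = {0, 2} := by decide
  have f2 : (Finset.univ.erase (2 : Fin 3)) = {0, 1} := by decide
  constructor
  · intro h
    refine ⟨?_, ?_, ?_, ?_, ?_, ?_⟩
    · simpa [e0, f0, Finset.sum_pair, Fin.prod_univ_two] using h 0 0
    · simpa [e1, f0, Finset.sum_pair, Fin.prod_univ_two] using h 0 1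
    · simpa [e0, f1, Finset.sum_pair, Fin.prod_univ_two] using h 1 0
    · simpa [e1, f1, Finset.sum_pair, Fin.prod_univ_two] using h 1 1
    · simpa [e0, f2, Finset.sum_pair, Fin.prod_univ_two] using h 2 0
    · simpa [e1, f2, Finset.sum_pair, Fin.prod_univ_two] using h 2 1
  · rintro ⟨h1, h2, h3, h4, h5, h6⟩ i a
    fin_cases i <;> fin_cases a <;>
      simp only [Fin.zero_eta, Fin.mk_one, Fin.reduceFinMk, e0, e1, f0, f1, f2,
        Finset.sum_pair (by decide : (1:Fin 3) ≠ 2), Finset.sum_pair (by decide : (0:Fin 3) ≠ 2),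
        Finset.sum_pair (by decide : (0:Fin 3) ≠ 1), Fin.prod_univ_two,
        Finset.prod_singleton, Fin.isValue] <;>
      [linear_combination h1; linear_combination h2; linear_combination h3;
       linear_combination h4; linear_combination h5; linear_combination h6]

lemma sqrt7_sq : ((Real.sqrt 7 : ℝ) : ℂ)^2 = 7 := by
  rw [← Complex.ofReal_pow]; norm_num [Real.sq_sqrt]

lemma quadA {lam : ℂ} (h : lam^2 - lam + 2 = 0) :
    lam = (1 + Real.sqrt 7 * I)/2 ∨ lam = (1 - Real.sqrt 7 * I)/2 := by
  have key : (lam - (1 + Real.sqrt 7 * I)/2) * (lam - (1 - Real.sqrt 7 * I)/2) = 0 := by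
    linear_combination h - (I^2/4) * sqrt7_sq - (7/4) * Complex.I_sq
  rcases mul_eq_zero.mp key with h' | h'
  · exact Or.inl (sub_eq_zero.mp h')
  · exact Or.inr (sub_eq_zero.mp h')

lemma quadB {lam : ℂ} (h : lam^2 + lam + 2 = 0) :
    lam = (-1 + Real.sqrt 7 * I)/2 ∨ lam = (-1 - Real.sqrt 7 * I)/2 := by
  have key : (lam - (-1 + Real.sqrt 7 * I)/2) * (lam - (-1 - Real.sqrt 7 * I)/2) = 0 := by
    linear_combination h - (I^2/4) * sqrt7_sq - (7/4) * Complex.I_sq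
  rcases mul_eq_zero.mp key with h' | h'
  · exact Or.inl (sub_eq_zero.mp h')
  · exact Or.inr (sub_eq_zero.mp h')

lemma quart {lam : ℂ} (h : lam^4 = 1) :
    lam = 1 ∨ lam = -1 ∨ lam = I ∨ lam = -I := by
  have key : (lam - 1) * (lam + 1) * (lam - I) * (lam + I) = 0 := by
    linear_combination h - (lam^2 - 1) * Complex.I_sq
  rcases mul_eq_zero.mp key with h' | h'
  · rcases mul_eq_zero.mp h' with h'' | h''
    · rcases mul_eq_zero.mp h'' with h3 | h3
      · exact Or.inl (sub_eq_zero.mp h3)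
      · exact Or.inr (Or.inl (eq_neg_of_add_eq_zero_left h3))
    · exact Or.inr (Or.inr (Or.inl (sub_eq_zero.mp h'')))
  · exact Or.inr (Or.inr (Or.inr (eq_neg_of_add_eq_zero_left h')))

lemma entry_zero {lam u v q : ℂ} (hl : lam ≠ 0) (h : lam * u^3 = v * q)
    (h' : lam * v^3 = u * q) (huv : u * v = 0) : u = 0 ∧ v = 0 := by
  have hu : lam * u^4 = (u*v) * q := by linear_combination u * h
  have hv : lam * v^4 = (u*v) * q := by linear_combination v * h'
  rw [huv, zero_mul] at hu hv
  constructor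
  · exact pow_eq_zero_iff (by norm_num) |>.mp ((mul_eq_zero.mp hu).resolve_left hl)
  · exact pow_eq_zero_iff (by norm_num) |>.mp ((mul_eq_zero.mp hv).resolve_left hl)

lemma two_case {lam pa pb : ℂ} (ha : pa ≠ 0) (hb : pb ≠ 0)
    (Ma : lam^2 * pa^3 = pa * pb^2) (Mb : lam^2 * pb^3 = pb * pa^2) : lam^4 = 1 := by
  have h1 : lam^2 * pa^2 = pb^2 :=
    mul_left_cancel₀ ha (by linear_combination Ma)
  have h2 : lam^2 * pb^2 = pa^2 :=
    mul_left_cancel₀ hb (by linear_combination Mb)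
  have key : (lam^4 - 1) * pa^2 = 0 := by linear_combination lam^2 * h1 + h2
  have := (mul_eq_zero.mp key).resolve_right (pow_ne_zero 2 ha)
  linear_combination this

lemma three_case {lam p0 p1 p2 : ℂ} (h0 : p0 ≠ 0) (h1 : p1 ≠ 0) (h2 : p2 ≠ 0)
    (Q0 : lam^2 * p0^2 = (p1+p2)^2) (Q1 : lam^2 * p1^2 = (p0+p2)^2)
    (Q2 : lam^2 * p2^2 = (p0+p1)^2) :
    lam = 1 ∨ lam = -1 ∨ lam = 2 ∨ lam = -2 ∨
      lam^2 - lam + 2 = 0 ∨ lam^2 + lam + 2 = 0 := by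
  by_cases hs : p0 + p1 + p2 = 0
  · have hz : (lam^2 - 1) * p0^2 = 0 := by linear_combination Q0 + (p1 + p2 - p0) * hs
    have hz2 := (mul_eq_zero.mp hz).resolve_right (pow_ne_zero 2 h0)
    have key : (lam - 1) * (lam + 1) = 0 := by linear_combination hz2
    rcases mul_eq_zero.mp key with h | h
    · exact Or.inl (sub_eq_zero.mp h)
    · exact Or.inr (Or.inl (eq_neg_of_add_eq_zero_left h))
  · have F0 : (lam*p0 - (p1+p2)) * (lam*p0 + (p1+p2)) = 0 := by linear_combination Q0
    have F1 : (lam*p1 - (p0+p2)) * (lam*p1 + (p0+p2)) = 0 := by linear_combination Q1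
    have F2 : (lam*p2 - (p0+p1)) * (lam*p2 + (p0+p1)) = 0 := by linear_combination Q2
    rcases mul_eq_zero.mp F0 with c0 | c0 <;> rcases mul_eq_zero.mp F1 with c1 | c1 <;>
      rcases mul_eq_zero.mp F2 with c2 | c2
    · -- (+,+,+) : (λ+1)²(λ-2)
      have hP : ((lam+1)^2 * (lam-2)) * (p0+p1+p2) = 0 := by
        linear_combination ((lam+1)^2) * c0 + ((lam+1)^2) * c1 + ((lam+1)^2) * c2
      have hQ := (mul_eq_zero.mp hP).resolve_right hs
      rcases mul_eq_zero.mp hQ with h | h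
      · have := pow_eq_zero_iff (n := 2) (by norm_num) |>.mp h
        exact Or.inr (Or.inl (eq_neg_of_add_eq_zero_left this))
      · exact Or.inr (Or.inr (Or.inl (sub_eq_zero.mp h)))
    · -- (+,+,-) : (λ+1)(λ²-λ+2)
      have hP : ((lam+1) * (lam^2 - lam + 2)) * (p0+p1+p2) = 0 := by
        linear_combination ((lam+1)*(lam-1)) * c0 + ((lam+1)*(lam-1)) * c1 + ((lam+1)^2) * c2
      have hQ := (mul_eq_zero.mp hP).resolve_right hs
      rcases mul_eq_zero.mp hQ with h | h
      · exact Or.inr (Or.inl (eq_neg_of_add_eq_zero_left h))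
      · exact Or.inr (Or.inr (Or.inr (Or.inr (Or.inl h))))
    · -- (+,-,+) : (λ+1)(λ²-λ+2)
      have hP : ((lam+1) * (lam^2 - lam + 2)) * (p0+p1+p2) = 0 := by
        linear_combination ((lam+1)*(lam-1)) * c0 + ((lam+1)^2) * c1 + ((lam+1)*(lam-1)) * c2
      have hQ := (mul_eq_zero.mp hP).resolve_right hs
      rcases mul_eq_zero.mp hQ with h | h
      · exact Or.inr (Or.inl (eq_neg_of_add_eq_zero_left h))
      · exact Or.inr (Or.inr (Or.inr (Or.inr (Or.inl h))))
    · -- (+,-,-) : (λ-1)(λ²+λ+2)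
      have hP : ((lam-1) * (lam^2 + lam + 2)) * (p0+p1+p2) = 0 := by
        linear_combination ((lam-1)^2) * c0 + ((lam+1)*(lam-1)) * c1 + ((lam+1)*(lam-1)) * c2
      have hQ := (mul_eq_zero.mp hP).resolve_right hs
      rcases mul_eq_zero.mp hQ with h | h
      · exact Or.inl (sub_eq_zero.mp h)
      · exact Or.inr (Or.inr (Or.inr (Or.inr (Or.inr h))))
    · -- (-,+,+) : (λ+1)(λ²-λ+2)
      have hP : ((lam+1) * (lam^2 - lam + 2)) * (p0+p1+p2) = 0 := by
        linear_combination ((lam+1)^2) * c0 + ((lam-1)*(lam+1)) * c1 + ((lam-1)*(lam+1)) * c2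
      have hQ := (mul_eq_zero.mp hP).resolve_right hs
      rcases mul_eq_zero.mp hQ with h | h
      · exact Or.inr (Or.inl (eq_neg_of_add_eq_zero_left h))
      · exact Or.inr (Or.inr (Or.inr (Or.inr (Or.inl h))))
    · -- (-,+,-) : (λ-1)(λ²+λ+2)
      have hP : ((lam-1) * (lam^2 + lam + 2)) * (p0+p1+p2) = 0 := by
        linear_combination ((lam+1)*(lam-1)) * c0 + ((lam-1)^2) * c1 + ((lam-1)*(lam+1)) * c2
      have hQ := (mul_eq_zero.mp hP).resolve_right hs
      rcases mul_eq_zero.mp hQ with h | h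
      · exact Or.inl (sub_eq_zero.mp h)
      · exact Or.inr (Or.inr (Or.inr (Or.inr (Or.inr h))))
    · -- (-,-,+) : (λ-1)(λ²+λ+2)
      have hP : ((lam-1) * (lam^2 + lam + 2)) * (p0+p1+p2) = 0 := by
        linear_combination ((lam-1)*(lam+1)) * c0 + ((lam-1)*(lam+1)) * c1 + ((lam-1)^2) * c2
      have hQ := (mul_eq_zero.mp hP).resolve_right hs
      rcases mul_eq_zero.mp hQ with h | h
      · exact Or.inl (sub_eq_zero.mp h)
      · exact Or.inr (Or.inr (Or.inr (Or.inr (Or.inr h))))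
    · -- (-,-,-) : (λ-1)²(λ+2)
      have hP : ((lam-1)^2 * (lam+2)) * (p0+p1+p2) = 0 := by
        linear_combination ((lam-1)^2) * c0 + ((lam-1)^2) * c1 + ((lam-1)^2) * c2
      have hQ := (mul_eq_zero.mp hP).resolve_right hs
      rcases mul_eq_zero.mp hQ with h | h
      · have := pow_eq_zero_iff (n := 2) (by norm_num) |>.mp h
        exact Or.inl (sub_eq_zero.mp this)
      · exact Or.inr (Or.inr (Or.inr (Or.inl (eq_neg_of_add_eq_zero_left h))))

lemma exists_eigA {lam : ℂ} (hq : lam^2 - lam + 2 = 0) :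
    ∃ x : Fin 3 × Fin 2 → ℂ, x ≠ 0 ∧ IsK3BlowupEig lam x := by
  obtain ⟨c0, hc0⟩ := IsAlgClosed.exists_pow_nat_eq (k := ℂ) (I*(lam+1)) (by norm_num : 0 < 2)
  obtain ⟨c1, hc1⟩ := IsAlgClosed.exists_pow_nat_eq (k := ℂ) (lam - 1) (by norm_num : 0 < 2)
  refine ⟨fun v => (![![c0, I*c0], ![c1, c1], ![c1, c1]] : Fin 3 → Fin 2 → ℂ) v.1 v.2, ?_, ?_⟩
  · have hl1 : lam - 1 ≠ 0 := by
      intro h; rw [sub_eq_zero] at h; rw [h] at hq; norm_num at hq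
    have hc1ne : c1 ≠ 0 := by
      intro h; rw [h] at hc1; simp at hc1; exact hl1 hc1.symm
    intro hxx; apply hc1ne
    simpa using congrFun hxx (1, 0)
  · rw [eig_iff]
    refine ⟨?_, ?_, ?_, ?_, ?_, ?_⟩ <;>
      simp only [Matrix.cons_val_zero, Matrix.cons_val_one, Matrix.head_cons,
        Matrix.cons_val_two, Matrix.tail_cons]
    · linear_combination (lam*c0)*hc0 - (2*I*c0)*hc1 + (I*c0)*hq
    · linear_combination (lam*I^3*c0)*hc0 - (2*c0)*hc1 + c0*hq + (lam*c0*(lam+1)*(I^2-1))*Complex.I_sq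
    · linear_combination (-I*c1)*hc0 + ((lam-1)*c1)*hc1 + c1*hq - (c1*(lam+1))*Complex.I_sq
    · linear_combination (-I*c1)*hc0 + ((lam-1)*c1)*hc1 + c1*hq - (c1*(lam+1))*Complex.I_sq
    · linear_combination (-I*c1)*hc0 + ((lam-1)*c1)*hc1 + c1*hq - (c1*(lam+1))*Complex.I_sq
    · linear_combination (-I*c1)*hc0 + ((lam-1)*c1)*hc1 + c1*hq - (c1*(lam+1))*Complex.I_sq

lemma exists_eigB {lam : ℂ} (hq : lam^2 + lam + 2 = 0) :
    ∃ x : Fin 3 × Fin 2 → ℂ, x ≠ 0 ∧ IsK3BlowupEig lam x := by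
  obtain ⟨c0, hc0⟩ := IsAlgClosed.exists_pow_nat_eq (k := ℂ) (lam - 1) (by norm_num : 0 < 2)
  obtain ⟨c1, hc1⟩ := IsAlgClosed.exists_pow_nat_eq (k := ℂ) (I*(lam+1)) (by norm_num : 0 < 2)
  refine ⟨fun v => (![![c0, c0], ![c1, I*c1], ![c1, I*c1]] : Fin 3 → Fin 2 → ℂ) v.1 v.2, ?_, ?_⟩
  · have hl1 : lam - 1 ≠ 0 := by
      intro h; rw [sub_eq_zero] at h; rw [h] at hq; norm_num at hq
    have hc0ne : c0 ≠ 0 := by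
      intro h; rw [h] at hc0; simp at hc0; exact hl1 hc0.symm
    intro hxx; apply hc0ne
    simpa using congrFun hxx (0, 0)
  · rw [eig_iff]
    refine ⟨?_, ?_, ?_, ?_, ?_, ?_⟩ <;>
      simp only [Matrix.cons_val_zero, Matrix.cons_val_one, Matrix.head_cons,
        Matrix.cons_val_two, Matrix.tail_cons]
    · linear_combination (lam*c0)*hc0 - (2*I*c0)*hc1 + c0*hq - (2*c0*(lam+1))*Complex.I_sq
    · linear_combination (lam*c0)*hc0 - (2*I*c0)*hc1 + c0*hq - (2*c0*(lam+1))*Complex.I_sq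
    · linear_combination (-I*c1)*hc0 + ((lam - I^2)*c1)*hc1 + (I*c1)*hq - (I*c1*(lam+1))*Complex.I_sq
    · linear_combination (-c1)*hc0 + ((I^3*lam - I)*c1)*hc1 + c1*hq + ((lam*(I^2-1)-1)*c1*(lam+1))*Complex.I_sq
    · linear_combination (-I*c1)*hc0 + ((lam - I^2)*c1)*hc1 + (I*c1)*hq - (I*c1*(lam+1))*Complex.I_sq
    · linear_combination (-c1)*hc0 + ((I^3*lam - I)*c1)*hc1 + c1*hq + ((lam*(I^2-1)-1)*c1*(lam+1))*Complex.I_sq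

theorem stmt_10 :
    {lam : ℂ | ∃ x : Fin 3 × Fin 2 → ℂ, x ≠ 0 ∧ IsK3BlowupEig lam x} =
      {0, 1, -1, I, -I, 2, -2,
        (1 + Real.sqrt 7 * I) / 2, (1 - Real.sqrt 7 * I) / 2,
        (-1 + Real.sqrt 7 * I) / 2, (-1 - Real.sqrt 7 * I) / 2} := by
  ext lam
  simp only [Set.mem_setOf_eq, Set.mem_insert_iff, Set.mem_singleton_iff]
  constructor
  · rintro ⟨x, hx, hE⟩
    rw [eig_iff] at hE
    obtain ⟨h1, h2, h3, h4, h5, h6⟩ := hE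
    by_cases hl : lam = 0
    · tauto
    · have M0 : lam^2 * (x (0,0)*x (0,1))^3 =
          (x (0,0)*x (0,1)) * ((x (1,0)*x (1,1)) + (x (2,0)*x (2,1)))^2 := by
        linear_combination (lam * x (0,1)^3) * h1 +
          (x (0,1) * ((x (1,0)*x (1,1)) + (x (2,0)*x (2,1)))) * h2
      have M1 : lam^2 * (x (1,0)*x (1,1))^3 =
          (x (1,0)*x (1,1)) * ((x (0,0)*x (0,1)) + (x (2,0)*x (2,1)))^2 := by
        linear_combination (lam * x (1,1)^3) * h3 +
          (x (1,1) * ((x (0,0)*x (0,1)) + (x (2,0)*x (2,1)))) * h4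
      have M2 : lam^2 * (x (2,0)*x (2,1))^3 =
          (x (2,0)*x (2,1)) * ((x (0,0)*x (0,1)) + (x (1,0)*x (1,1)))^2 := by
        linear_combination (lam * x (2,1)^3) * h5 +
          (x (2,1) * ((x (0,0)*x (0,1)) + (x (1,0)*x (1,1)))) * h6
      by_cases k0 : x (0,0)*x (0,1) = 0 <;> by_cases k1 : x (1,0)*x (1,1) = 0 <;>
        by_cases k2 : x (2,0)*x (2,1) = 0
      · -- all classes zero : contradiction with x ≠ 0
        exfalso
        obtain ⟨z1, z2⟩ := entry_zero hl h1 h2 k0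
        obtain ⟨z3, z4⟩ := entry_zero hl h3 h4 k1
        obtain ⟨z5, z6⟩ := entry_zero hl h5 h6 k2
        apply hx
        funext v
        obtain ⟨i, a⟩ := v
        fin_cases i <;> fin_cases a <;> first
          | exact z1 | exact z2 | exact z3 | exact z4 | exact z5 | exact z6
      · -- only class 2 nonzero : contradiction
        exfalso
        have hz : lam^2 * (x (2,0)*x (2,1))^3 = 0 := by rw [M2, k0, k1]; ring
        exact (pow_ne_zero 3 k2) ((mul_eq_zero.mp hz).resolve_left (pow_ne_zero 2 hl))
      · -- only class 1 nonzero : contradiction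
        exfalso
        have hz : lam^2 * (x (1,0)*x (1,1))^3 = 0 := by rw [M1, k0, k2]; ring
        exact (pow_ne_zero 3 k1) ((mul_eq_zero.mp hz).resolve_left (pow_ne_zero 2 hl))
      · -- classes 1,2 nonzero
        have Mc : lam^2 * (x (1,0)*x (1,1))^3 = (x (1,0)*x (1,1)) * (x (2,0)*x (2,1))^2 := by
          rw [M1, k0]; ring
        have Me : lam^2 * (x (2,0)*x (2,1))^3 = (x (2,0)*x (2,1)) * (x (1,0)*x (1,1))^2 := by
          rw [M2, k0]; ring
        rcases quart (two_case k1 k2 Mc Me) with h | h | h | h <;> tauto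
      · -- only class 0 nonzero : contradiction
        exfalso
        have hz : lam^2 * (x (0,0)*x (0,1))^3 = 0 := by rw [M0, k1, k2]; ring
        exact (pow_ne_zero 3 k0) ((mul_eq_zero.mp hz).resolve_left (pow_ne_zero 2 hl))
      · -- classes 0,2 nonzero
        have Mc : lam^2 * (x (0,0)*x (0,1))^3 = (x (0,0)*x (0,1)) * (x (2,0)*x (2,1))^2 := by
          rw [M0, k1]; ring
        have Me : lam^2 * (x (2,0)*x (2,1))^3 = (x (2,0)*x (2,1)) * (x (0,0)*x (0,1))^2 := by
          rw [M2, k1]; ring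
        rcases quart (two_case k0 k2 Mc Me) with h | h | h | h <;> tauto
      · -- classes 0,1 nonzero
        have Mc : lam^2 * (x (0,0)*x (0,1))^3 = (x (0,0)*x (0,1)) * (x (1,0)*x (1,1))^2 := by
          rw [M0, k2]; ring
        have Me : lam^2 * (x (1,0)*x (1,1))^3 = (x (1,0)*x (1,1)) * (x (0,0)*x (0,1))^2 := by
          rw [M1, k2]; ring
        rcases quart (two_case k0 k1 Mc Me) with h | h | h | h <;> tauto
      · -- all classes nonzero
        have Q0 : lam^2 * (x (0,0)*x (0,1))^2 =
            ((x (1,0)*x (1,1)) + (x (2,0)*x (2,1)))^2 :=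
          mul_left_cancel₀ k0 (by linear_combination M0)
        have Q1 : lam^2 * (x (1,0)*x (1,1))^2 =
            ((x (0,0)*x (0,1)) + (x (2,0)*x (2,1)))^2 :=
          mul_left_cancel₀ k1 (by linear_combination M1)
        have Q2 : lam^2 * (x (2,0)*x (2,1))^2 =
            ((x (0,0)*x (0,1)) + (x (1,0)*x (1,1)))^2 :=
          mul_left_cancel₀ k2 (by linear_combination M2)
        rcases three_case k0 k1 k2 Q0 Q1 Q2 with h | h | h | h | h | h
        · tauto
        · tauto
        · tauto
        · tauto
        · rcases quadA h with h' | h' <;> tauto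
        · rcases quadB h with h' | h' <;> tauto
  · rintro (rfl | rfl | rfl | rfl | rfl | rfl | rfl | h | h | h | h)
    -- lam = 0
    · refine ⟨fun v => (![![1, 0], ![0, 0], ![0, 0]] : Fin 3 → Fin 2 → ℂ) v.1 v.2, ?_, ?_⟩
      · intro hxx; simpa using congrFun hxx (0, 0)
      · rw [eig_iff]
        refine ⟨?_, ?_, ?_, ?_, ?_, ?_⟩ <;>
          simp only [Matrix.cons_val_zero, Matrix.cons_val_one, Matrix.head_cons,
            Matrix.cons_val_two, Matrix.tail_cons] <;> ring
    -- lam = 1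
    · refine ⟨fun v => (![![1, 1], ![1, 1], ![0, 0]] : Fin 3 → Fin 2 → ℂ) v.1 v.2, ?_, ?_⟩
      · intro hxx; simpa using congrFun hxx (0, 0)
      · rw [eig_iff]
        refine ⟨?_, ?_, ?_, ?_, ?_, ?_⟩ <;>
          simp only [Matrix.cons_val_zero, Matrix.cons_val_one, Matrix.head_cons,
            Matrix.cons_val_two, Matrix.tail_cons] <;> ring
    -- lam = -1
    · refine ⟨fun v => (![![1, 1], ![1, -1], ![0, 0]] : Fin 3 → Fin 2 → ℂ) v.1 v.2, ?_, ?_⟩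
      · intro hxx; simpa using congrFun hxx (0, 0)
      · rw [eig_iff]
        refine ⟨?_, ?_, ?_, ?_, ?_, ?_⟩ <;>
          simp only [Matrix.cons_val_zero, Matrix.cons_val_one, Matrix.head_cons,
            Matrix.cons_val_two, Matrix.tail_cons] <;> ring
    -- lam = I
    · refine ⟨fun v => (![![1, 1], ![1, I], ![0, 0]] : Fin 3 → Fin 2 → ℂ) v.1 v.2, ?_, ?_⟩
      · intro hxx; simpa using congrFun hxx (0, 0)
      · rw [eig_iff]
        refine ⟨?_, ?_, ?_, ?_, ?_, ?_⟩ <;>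
          simp only [Matrix.cons_val_zero, Matrix.cons_val_one, Matrix.head_cons,
            Matrix.cons_val_two, Matrix.tail_cons]
        · ring
        · ring
        · ring
        · linear_combination (I^2 - 1) * Complex.I_sq
        · ring
        · ring
    -- lam = -I
    · refine ⟨fun v => (![![1, 1], ![1, -I], ![0, 0]] : Fin 3 → Fin 2 → ℂ) v.1 v.2, ?_, ?_⟩
      · intro hxx; simpa using congrFun hxx (0, 0)
      · rw [eig_iff]
        refine ⟨?_, ?_, ?_, ?_, ?_, ?_⟩ <;>
          simp only [Matrix.cons_val_zero, Matrix.cons_val_one, Matrix.head_cons,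
            Matrix.cons_val_two, Matrix.tail_cons]
        · ring
        · ring
        · ring
        · linear_combination (I^2 - 1) * Complex.I_sq
        · ring
        · ring
    -- lam = 2
    · refine ⟨fun v => (![![1, 1], ![1, 1], ![1, 1]] : Fin 3 → Fin 2 → ℂ) v.1 v.2, ?_, ?_⟩
      · intro hxx; simpa using congrFun hxx (0, 0)
      · rw [eig_iff]
        refine ⟨?_, ?_, ?_, ?_, ?_, ?_⟩ <;>
          simp only [Matrix.cons_val_zero, Matrix.cons_val_one, Matrix.head_cons,
            Matrix.cons_val_two, Matrix.tail_cons] <;> ring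
    -- lam = -2
    · refine ⟨fun v => (![![1, I], ![1, I], ![1, I]] : Fin 3 → Fin 2 → ℂ) v.1 v.2, ?_, ?_⟩
      · intro hxx; simpa using congrFun hxx (0, 0)
      · rw [eig_iff]
        refine ⟨?_, ?_, ?_, ?_, ?_, ?_⟩ <;>
          simp only [Matrix.cons_val_zero, Matrix.cons_val_one, Matrix.head_cons,
            Matrix.cons_val_two, Matrix.tail_cons]
        · linear_combination (-2 : ℂ) * Complex.I_sq
        · linear_combination (-2*I : ℂ) * Complex.I_sq
        · linear_combination (-2 : ℂ) * Complex.I_sq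
        · linear_combination (-2*I : ℂ) * Complex.I_sq
        · linear_combination (-2 : ℂ) * Complex.I_sq
        · linear_combination (-2*I : ℂ) * Complex.I_sq
    -- the four quadratic roots
    · refine exists_eigA ?_
      rw [h]; linear_combination (I^2/4) * sqrt7_sq + (7/4) * Complex.I_sq
    · refine exists_eigA ?_
      rw [h]; linear_combination (I^2/4) * sqrt7_sq + (7/4) * Complex.I_sq
    · refine exists_eigB ?_
      rw [h]; linear_combination (I^2/4) * sqrt7_sq + (7/4) * Complex.I_sq
    · refine exists_eigB ?_
      rw [h]; linear_combination (I^2/4) * sqrt7_sq + (7/4) * Complex.I_sq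
end

section
/- The eigenvalue −2 of the 4-uniform hypergraph K₃^[2] is an N-eigenvalue: there is no nonzero real vector x ∈ ℝ⁶ satisfying −2 x_v³ = Σ_{e ∋ v} Π_{u ∈ e\{v}} x_u for all vertices v of K₃^[2]. -/
open Finset

lemma pair_key (u v S : ℝ) (h1 : -2*u^3 = v*S) (h2 : -2*v^3 = u*S) :
    (u*v) * (S + 2*(u*v)) = 0 ∧ ((u*v = 0) → u = 0 ∧ v = 0) := by
  have a1 : -2*u^4 = u*v*S := by linear_combination u * h1
  have a2 : -2*v^4 = u*v*S := by linear_combination v * h2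
  have h4 : u^4 = v^4 := by linarith
  have hsq : u^2 = v^2 := by
    have h4' : (u^2)^2 = (v^2)^2 := by linear_combination h4
    exact (sq_eq_sq₀ (sq_nonneg u) (sq_nonneg v)).1 h4'
  constructor
  · linear_combination -a1 - 2*u^2*hsq
  · intro hp
    rcases mul_eq_zero.1 hp with hu | hv
    · refine ⟨hu, ?_⟩
      have : v^4 = 0 := by rw [← h4, hu]; ring
      exact pow_eq_zero_iff (by norm_num) |>.1 this
    · refine ⟨?_, hv⟩
      have : u^4 = 0 := by rw [h4, hv]; ring
      exact pow_eq_zero_iff (by norm_num) |>.1 this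

/-- `-2` is an N-eigenvalue of `K₃^[2]`: it has no real eigenvector. -/
theorem stmt_12 :
    ¬ ∃ x : Fin 3 × Fin 2 → ℝ, x ≠ 0 ∧
      ∀ (i : Fin 3) (a : Fin 2),
        (-2 : ℝ) * x (i, a) ^ 3 =
          (∏ b ∈ Finset.univ.erase a, x (i, b)) *
            ∑ j ∈ Finset.univ.erase i, ∏ b : Fin 2, x (j, b) := by
  rintro ⟨x, hx, h⟩
  have e0 : (Finset.univ.erase (0:Fin 2)) = {1} := by decide
  have e1 : (Finset.univ.erase (1:Fin 2)) = {0} := by decide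
  have f0 : (Finset.univ.erase (0:Fin 3)) = {1, 2} := by decide
  have f1 : (Finset.univ.erase (1:Fin 3)) = {0, 2} := by decide
  have f2 : (Finset.univ.erase (2:Fin 3)) = {0, 1} := by decide
  set p : Fin 3 → ℝ := fun i => x (i,0) * x (i,1) with hp
  have S0 : ∀ i : Fin 3, ∏ b : Fin 2, x (i, b) = p i := fun i => by
    simp [Fin.prod_univ_two, hp]
  have key : ∀ i : Fin 3, ∀ S : ℝ,
      (∑ j ∈ Finset.univ.erase i, ∏ b : Fin 2, x (j, b)) = S →
      p i * (S + 2 * p i) = 0 ∧ (p i = 0 → x (i,0) = 0 ∧ x (i,1) = 0) := by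
    intro i S hS
    have h1 := h i 0
    have h2 := h i 1
    rw [e0, hS, Finset.prod_singleton] at h1
    rw [e1, hS, Finset.prod_singleton] at h2
    have := pair_key (x (i,0)) (x (i,1)) S (by linarith) (by linarith)
    exact this
  have k0 := key 0 (p 1 + p 2) (by rw [f0]; simp [S0])
  have k1 := key 1 (p 0 + p 2) (by rw [f1]; simp [S0])
  have k2 := key 2 (p 0 + p 1) (by rw [f2]; simp [S0])
  have hz : p 0 = 0 ∧ p 1 = 0 ∧ p 2 = 0 := by
    have q0 := mul_eq_zero.1 k0.1
    have q1 := mul_eq_zero.1 k1.1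
    have q2 := mul_eq_zero.1 k2.1
    rcases q0 with q0 | q0 <;> rcases q1 with q1 | q1 <;> rcases q2 with q2 | q2 <;>
      refine ⟨?_, ?_, ?_⟩ <;> linarith
  have c0 := k0.2 hz.1
  have c1 := k1.2 hz.2.1
  have c2 := k2.2 hz.2.2
  apply hx
  funext v
  obtain ⟨i, a⟩ := v
  fin_cases i <;> fin_cases a <;>
    simp only [Pi.zero_apply] <;>
    first
      | exact c0.1 | exact c0.2 | exact c1.1 | exact c1.2 | exact c2.1 | exact c2.2
end

section
/- Let G = (V,E) be a graph, s ≥ 2, and λ ≠ 0 an eigenvalue of G^[s] with eigenvector x. For each i ∈ V with all components of x on V_i nonzero, the quantity X_i := Π_{v ∈ V_i} x_v satisfies (λ X_i)^s = (Σ_{j : {i,j} ∈ E, X_j defined} X_j)^s, hence λ X_i = η_i Σ_j X_j for some s-th root of unity η_i. -/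
open Finset

theorem stmt_13 {V : Type*} [Fintype V] [DecidableEq V]
    (G : SimpleGraph V) [DecidableRel G.Adj] (s : ℕ) (hs : 2 ≤ s)
    (lam : ℂ) (hlam : lam ≠ 0) (x : V × Fin s → ℂ) (hx : x ≠ 0)
    (heig : IsBlowupEig G s lam x)
    (X : V → ℂ) (hX : ∀ i, X i = ∏ a : Fin s, x (i, a))
    (i : V) (hi : ∀ a : Fin s, x (i, a) ≠ 0) :
    (lam * X i) ^ s = (∑ j ∈ G.neighborFinset i, X j) ^ s ∧
      ∃ η : ℂ, η ^ s = 1 ∧ lam * X i = η * ∑ j ∈ G.neighborFinset i, X j := by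
  have hXne : X i ≠ 0 := by
    rw [hX]; exact Finset.prod_ne_zero_iff.mpr (fun a _ => hi a)
  have hXpow : X i ^ (s - 1) ≠ 0 := pow_ne_zero _ hXne
  set Ss : ℂ := ∑ j ∈ G.neighborFinset i, ∏ b : Fin s, x (j, b) with hSs
  have hSeq : (∑ j ∈ G.neighborFinset i, X j) = Ss := by
    exact Finset.sum_congr rfl fun j _ => hX j
  -- product of erased products
  have hPP : (∏ a : Fin s, ∏ b ∈ Finset.univ.erase a, x (i, b)) = X i ^ (s - 1) := by
    have h1 : ∀ a : Fin s, x (i, a) * ∏ b ∈ Finset.univ.erase a, x (i, b) = X i := by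
      intro a
      rw [hX]
      exact Finset.mul_prod_erase Finset.univ (fun b => x (i, b)) (Finset.mem_univ a)
    have h2 : (∏ a : Fin s, (x (i, a) * ∏ b ∈ Finset.univ.erase a, x (i, b))) = X i ^ s := by
      rw [Finset.prod_congr rfl fun a _ => h1 a, Finset.prod_const, Finset.card_univ,
        Fintype.card_fin]
    rw [Finset.prod_mul_distrib, ← hX i] at h2
    have : X i * (∏ a : Fin s, ∏ b ∈ Finset.univ.erase a, x (i, b)) = X i * X i ^ (s - 1) := by
      rw [h2, ← pow_succ']
      congr 1
      omega
    exact mul_left_cancel₀ hXne this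
  have hprod : (∏ a : Fin s, (lam * x (i, a) ^ (2 * s - 1)))
      = ∏ a : Fin s, ((∏ b ∈ Finset.univ.erase a, x (i, b)) * Ss) :=
    Finset.prod_congr rfl fun a _ => heig i a
  rw [Finset.prod_mul_distrib, Finset.prod_mul_distrib, Finset.prod_const, Finset.prod_const,
    Finset.card_univ, Fintype.card_fin, Finset.prod_pow, ← hX i, hPP] at hprod
  -- hprod : lam ^ s * X i ^ (2*s-1) = X i ^ (s-1) * Ss ^ s
  have hmain : (lam * X i) ^ s = Ss ^ s := by
    have h3 : X i ^ (2 * s - 1) = X i ^ s * X i ^ (s - 1) := by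
      rw [← pow_add]; congr 1; omega
    rw [h3, ← mul_assoc, mul_comm (X i ^ (s - 1)) (Ss ^ s)] at hprod
    have := mul_right_cancel₀ hXpow hprod
    rw [mul_pow, this]
  refine ⟨by rw [hSeq]; exact hmain, ?_⟩
  by_cases hS : Ss = 0
  · refine ⟨1, one_pow s, ?_⟩
    have : (lam * X i) ^ s = 0 := by rw [hmain, hS, zero_pow (by omega)]
    rw [pow_eq_zero_iff (by omega : s ≠ 0)] at this
    rw [hSeq, hS, this, mul_zero]
  · refine ⟨lam * X i / Ss, ?_, ?_⟩
    · rw [div_pow, hmain, div_self (pow_ne_zero _ hS)]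
    · rw [hSeq, div_mul_cancel₀ _ hS]
end

section
/- For s ≥ 2, the set of eigenvalues of the s-blowup G^[s] of a graph G depends only on the squares π(i)² of the vertex weights: λ is an eigenvalue of G^[s] if and only if λ is an eigenvalue of A(Ĝ) D_a for some induced subgraph Ĝ of G and some diagonal matrix D_a with diagonal entries a_i that are s-th roots of unity. -/
open Finset Matrix

lemma mem_spectrum_of_mulVec' {n : Type*} [Fintype n] [DecidableEq n]
    (M : Matrix n n ℂ) (lam : ℂ) (q : n → ℂ) (hq : q ≠ 0)
    (h : M.mulVec q = lam • q) : lam ∈ spectrum ℂ M := by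
  rw [spectrum.mem_iff]
  intro hU
  apply hq
  have h0 : (algebraMap ℂ (Matrix n n ℂ) lam - M).mulVec q = 0 := by
    rw [Matrix.sub_mulVec, h, Algebra.algebraMap_eq_smul_one,
      Matrix.smul_mulVec, Matrix.one_mulVec, sub_self]
  obtain ⟨u, hu⟩ := hU
  have h1 : ((↑u⁻¹ : Matrix n n ℂ) * (algebraMap ℂ (Matrix n n ℂ) lam - M)) = 1 := by
    rw [← hu]; exact u.inv_mul
  calc q = (((↑u⁻¹ : Matrix n n ℂ) * (algebraMap ℂ (Matrix n n ℂ) lam - M))).mulVec q := by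
        rw [h1, Matrix.one_mulVec]
    _ = (↑u⁻¹ : Matrix n n ℂ).mulVec ((algebraMap ℂ (Matrix n n ℂ) lam - M).mulVec q) := by
        rw [← Matrix.mulVec_mulVec]
    _ = 0 := by rw [h0, Matrix.mulVec_zero]

lemma exists_mulVec_of_mem_spectrum' {n : Type*} [Fintype n] [DecidableEq n]
    (M : Matrix n n ℂ) (lam : ℂ) (h : lam ∈ spectrum ℂ M) :
    ∃ q : n → ℂ, q ≠ 0 ∧ M.mulVec q = lam • q := by
  rw [spectrum.mem_iff] at h
  have hd : (algebraMap ℂ (Matrix n n ℂ) lam - M).det = 0 := by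
    by_contra hd
    exact h ((Matrix.isUnit_iff_isUnit_det _).mpr (isUnit_iff_ne_zero.mpr hd))
  obtain ⟨v, hv, hv0⟩ := (Matrix.exists_mulVec_eq_zero_iff).mpr hd
  refine ⟨v, hv, ?_⟩
  rw [Matrix.sub_mulVec, Algebra.algebraMap_eq_smul_one,
    Matrix.smul_mulVec, Matrix.one_mulVec, sub_eq_zero] at hv0
  exact hv0.symm

/-- The spectrum of `G^[s]` depends only on the squares of the vertex weights:
it consists of the eigenvalues of `A(Ĝ) * D_a` with `a_i` s-th roots of unity. -/
theorem stmt_18 {V : Type*} [Fintype V] [DecidableEq V]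
    (G : SimpleGraph V) [DecidableRel G.Adj] (s : ℕ) (hs : 2 ≤ s) (lam : ℂ) :
    (∃ x : V × Fin s → ℂ, x ≠ 0 ∧ IsBlowupEig G s lam x) ↔
      ∃ S : Finset V, ∃ a : {i // i ∈ S} → ℂ, (∀ i, a i ^ s = 1) ∧
        lam ∈ spectrum ℂ
          ((Matrix.of fun i j : {i // i ∈ S} => if G.Adj i j then (1 : ℂ) else 0) *
            Matrix.diagonal a) := by
  classical
  have b0 : Fin s := ⟨0, by omega⟩
  constructor
  · rintro ⟨x, hx, hEig⟩
    obtain ⟨⟨i0, a0⟩, hx0⟩ : ∃ p, x p ≠ 0 := by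
      by_contra hc; push_neg at hc; exact hx (funext hc)
    set P : V → ℂ := fun i => ∏ b : Fin s, x (i, b) with hPdef
    by_cases hlam : lam = 0
    · -- use singleton S
      refine ⟨{i0}, fun _ => 1, fun _ => one_pow s, ?_⟩
      have hM : ((Matrix.of fun i j : {i // i ∈ ({i0} : Finset V)} =>
          if G.Adj i j then (1:ℂ) else 0) * Matrix.diagonal (fun _ => (1:ℂ))) = 0 := by
        ext i j
        have hi : (i : V) = i0 := Finset.mem_singleton.mp i.2
        have hj : (j : V) = i0 := Finset.mem_singleton.mp j.2
        simp [Matrix.mul_diagonal, hi, hj]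
      rw [hM, hlam]
      apply mem_spectrum_of_mulVec' _ _ (fun _ => 1)
      · intro h
        simpa using congrFun h ⟨i0, Finset.mem_singleton_self i0⟩
      · simp
    · -- main case
      have key : ∀ i (a : Fin s), lam * x (i,a) ^ (2*s) =
          P i * ∑ j ∈ G.neighborFinset i, P j := by
        intro i a
        have h2 : 2*s = (2*s-1)+1 := by omega
        have hxp : x (i,a)^(2*s) = x (i,a)^(2*s-1) * x (i,a) := by
          conv_lhs => rw [h2]
          rw [pow_succ]
        calc lam * x (i,a)^(2*s) = lam * x (i,a)^(2*s-1) * x (i,a) := by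
              rw [hxp, ← mul_assoc]
          _ = ((∏ b ∈ Finset.univ.erase a, x (i, b)) *
                ∑ j ∈ G.neighborFinset i, P j) * x (i,a) := by rw [hEig i a]
          _ = P i * ∑ j ∈ G.neighborFinset i, P j := by
              rw [mul_right_comm, Finset.prod_erase_mul _ _ (Finset.mem_univ a)]
      set S : Finset V := Finset.univ.filter (fun i => P i ≠ 0) with hSdef
      have hPi0 : P i0 ≠ 0 := by
        intro h0
        have := key i0 a0
        rw [h0, zero_mul] at this
        exact (mul_ne_zero hlam (pow_ne_zero _ hx0)) this
      have hmemS : ∀ i, i ∈ S ↔ P i ≠ 0 := by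
        intro i; simp [hSdef]
      -- all 2s-powers agree within a vertex
      have hsame : ∀ i (a : Fin s), x (i,a) ^ (2*s) = x (i,b0) ^ (2*s) := by
        intro i a
        apply mul_left_cancel₀ hlam
        rw [key i a, key i b0]
      set t : V → ℂ := fun i => x (i,b0) ^ (2*s) with htdef
      have hts : ∀ i, P i ≠ 0 → t i ≠ 0 := by
        intro i hPi
        apply pow_ne_zero
        have := Finset.prod_ne_zero_iff.mp hPi b0 (Finset.mem_univ _)
        exact this
      have hP2s : ∀ i, (P i ^ 2) ^ s = t i ^ s := by
        intro i
        calc (P i ^ 2)^s = P i ^ (2*s) := by rw [← pow_mul, mul_comm]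
          _ = ∏ b : Fin s, x (i,b) ^ (2*s) := by rw [hPdef]; rw [← Finset.prod_pow]
          _ = ∏ _b : Fin s, t i := Finset.prod_congr rfl (fun b _ => hsame i b)
          _ = t i ^ s := by rw [Finset.prod_const, Finset.card_univ, Fintype.card_fin]
      refine ⟨S, fun i => P i.val ^ 2 / t i.val, ?_, ?_⟩
      · intro i
        have hPi : P i.val ≠ 0 := (hmemS i.val).mp i.2
        rw [div_pow, hP2s, div_self (pow_ne_zero _ (hts _ hPi))]
      · apply mem_spectrum_of_mulVec' _ _ (fun i => t i.val / P i.val)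
        · intro h
          have := congrFun h ⟨i0, (hmemS i0).mpr hPi0⟩
          simp only [Pi.zero_apply] at this
          exact hts i0 hPi0 ((div_eq_zero_iff.mp this).resolve_right hPi0)
        · funext i
          have hPi : P i.val ≠ 0 := (hmemS i.val).mp i.2
          have hsum : (∑ j : {i // i ∈ S}, (if G.Adj i.val j.val then (1:ℂ) else 0) *
              (P j.val ^ 2 / t j.val) * (t j.val / P j.val)) =
              ∑ j ∈ G.neighborFinset i.val, P j := by
            have hterm : ∀ j : {i // i ∈ S}, (if G.Adj i.val j.val then (1:ℂ) else 0) *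
                (P j.val ^ 2 / t j.val) * (t j.val / P j.val) =
                if G.Adj i.val j.val then P j.val else 0 := by
              intro j
              have hPj : P j.val ≠ 0 := (hmemS j.val).mp j.2
              have htj : t j.val ≠ 0 := hts _ hPj
              by_cases hadj : G.Adj i.val j.val
              · rw [if_pos hadj, if_pos hadj]
                field_simp
              · rw [if_neg hadj, if_neg hadj, zero_mul, zero_mul]
            rw [Finset.sum_congr rfl (fun j _ => hterm j)]
            rw [Finset.sum_coe_sort S (fun j => if G.Adj i.val j then P j else 0)]
            have h1 : (∑ j ∈ S, if G.Adj i.val j then P j else 0) =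
                ∑ j ∈ Finset.univ, if G.Adj i.val j then P j else 0 := by
              apply Finset.sum_subset (Finset.subset_univ S)
              intro j _ hjS
              have hPj : P j = 0 := by
                by_contra hne
                exact hjS ((hmemS j).mpr hne)
              rw [hPj, ite_self]
            rw [h1, ← Finset.sum_filter]
            congr 1
            ext j
            simp [SimpleGraph.mem_neighborFinset]
          show (∑ j : {i // i ∈ S}, ((Matrix.of fun k l : {i // i ∈ S} =>
              if G.Adj k.val l.val then (1:ℂ) else 0) * Matrix.diagonal
              (fun k : {i // i ∈ S} => P k.val ^ 2 / t k.val)) i j * (t j.val / P j.val)) =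
              lam * (t i.val / P i.val)
          simp only [Matrix.mul_diagonal, Matrix.of_apply]
          rw [hsum]
          have hk : lam * t i.val = P i.val * ∑ j ∈ G.neighborFinset i.val, P j :=
            key i.val b0
          rw [mul_div_assoc', eq_comm, div_eq_iff hPi, hk]
          ring
  · rintro ⟨S, a, ha, hspec⟩
    obtain ⟨v, hv, hMv⟩ := exists_mulVec_of_mem_spectrum' _ _ hspec
    set w : V → ℂ := fun i => if h : i ∈ S then v ⟨i,h⟩ else 0 with hwdef
    set α : V → ℂ := fun i => if h : i ∈ S then a ⟨i,h⟩ else 1 with hadef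
    have hαs : ∀ i, α i ^ s = 1 := by
      intro i; by_cases h : i ∈ S
      · simp only [hadef, dif_pos h]; exact ha ⟨i,h⟩
      · simp only [hadef, dif_neg h, one_pow]
    have hαne : ∀ i, α i ≠ 0 := by
      intro i h0
      have h1 := hαs i
      rw [h0, zero_pow (by omega : s ≠ 0)] at h1
      exact zero_ne_one h1
    choose u hu using fun i => IsAlgClosed.exists_pow_nat_eq (α i) (n := 2) (by norm_num)
    choose c hc using fun i => IsAlgClosed.exists_pow_nat_eq (u i * w i) (n := s) (by omega)
    have hune : ∀ i, u i ≠ 0 := fun i h0 => hαne i (by rw [← hu i, h0]; ring)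
    set x : V × Fin s → ℂ := fun p =>
      if w p.1 = 0 then 0 else (if (p.2 : ℕ) = 0 then u p.1 * c p.1 else c p.1) with hxdef
    have hcne : ∀ i, w i ≠ 0 → c i ≠ 0 := by
      intro i hwi h0
      have h1 := hc i
      rw [h0, zero_pow (by omega : s ≠ 0)] at h1
      exact mul_ne_zero (hune i) hwi h1.symm
    have hwS : ∀ i, w i ≠ 0 → i ∈ S := by
      intro i hwi; by_contra h; exact hwi (by simp [hwdef, h])
    have hprod : ∀ i, (∏ b : Fin s, x (i, b)) = α i * w i := by
      intro i
      by_cases hwi : w i = 0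
      · rw [hwi, mul_zero]
        apply Finset.prod_eq_zero (Finset.mem_univ (⟨0, by omega⟩ : Fin s))
        simp [hxdef, hwi]
      · rw [← Finset.mul_prod_erase Finset.univ _
          (Finset.mem_univ (⟨0, by omega⟩ : Fin s))]
        have h0 : x (i, ⟨0, by omega⟩) = u i * c i := by simp [hxdef, hwi]
        have hrest : ∀ b ∈ Finset.univ.erase (⟨0, by omega⟩ : Fin s), x (i, b) = c i := by
          intro b hb
          have hbne : b ≠ ⟨0, by omega⟩ := (Finset.mem_erase.mp hb).1
          have hb0 : (b : ℕ) ≠ 0 := fun h => hbne (Fin.ext h)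
          simp [hxdef, hwi, hb0]
        rw [h0, Finset.prod_congr rfl hrest, Finset.prod_const,
          Finset.card_erase_of_mem (Finset.mem_univ _), Finset.card_univ, Fintype.card_fin]
        have h1 : u i * c i * c i ^ (s-1) = u i * c i ^ (s-1+1) := by rw [pow_succ]; ring
        rw [h1, show s-1+1 = s by omega, hc i, ← hu i]
        ring
    have hx2s : ∀ i, w i ≠ 0 → ∀ b : Fin s, x (i,b) ^ (2*s) = α i * w i ^ 2 := by
      intro i hwi b
      have hc2 : c i ^ (2*s) = α i * w i ^ 2 := by
        rw [mul_comm 2 s, pow_mul, hc i, mul_pow, hu i]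
      by_cases hb : (b : ℕ) = 0
      · have hxv : x (i,b) = u i * c i := by simp [hxdef, hwi, hb]
        have hu2s : u i ^ (2*s) = 1 := by rw [pow_mul, hu i, hαs i]
        rw [hxv, mul_pow, hu2s, one_mul, hc2]
      · have hxv : x (i,b) = c i := by simp [hxdef, hwi, hb]
        rw [hxv, hc2]
    have hsum : ∀ i, i ∈ S → (∑ j ∈ G.neighborFinset i, α j * w j) = lam * w i := by
      intro i hiS
      have h := congrFun hMv ⟨i, hiS⟩
      have h2 : (∑ j : {k // k ∈ S}, ((Matrix.of fun k l : {i // i ∈ S} =>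
          if G.Adj k.val l.val then (1:ℂ) else 0) * Matrix.diagonal a) ⟨i,hiS⟩ j * v j)
          = lam * v ⟨i,hiS⟩ := h
      simp only [Matrix.mul_diagonal, Matrix.of_apply] at h2
      have hwi : w i = v ⟨i,hiS⟩ := by simp [hwdef, hiS]
      rw [hwi, ← h2]
      calc (∑ j ∈ G.neighborFinset i, α j * w j)
          = ∑ j ∈ Finset.univ, if G.Adj i j then α j * w j else 0 := by
            rw [← Finset.sum_filter]
            congr 1
            ext j
            simp [SimpleGraph.mem_neighborFinset]
        _ = ∑ j ∈ S, if G.Adj i j then α j * w j else 0 := by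
            symm
            apply Finset.sum_subset (Finset.subset_univ S)
            intro j _ hjS
            have hwj : w j = 0 := by simp [hwdef, hjS]
            rw [hwj, mul_zero, ite_self]
        _ = ∑ j : {k // k ∈ S}, if G.Adj i j.val then α j.val * w j.val else 0 :=
            (Finset.sum_coe_sort S (fun j => if G.Adj i j then α j * w j else 0)).symm
        _ = ∑ j : {k // k ∈ S}, (if G.Adj i j.val then (1:ℂ) else 0) * a j * v j := by
            apply Finset.sum_congr rfl
            intro j _
            have haj : α j.val = a j := by simp [hadef, j.2]
            have hwj : w j.val = v j := by simp [hwdef, j.2]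
            rw [haj, hwj]
            by_cases hadj : G.Adj i j.val
            · rw [if_pos hadj, if_pos hadj, one_mul]
            · rw [if_neg hadj, if_neg hadj, zero_mul, zero_mul]
    refine ⟨x, ?_, ?_⟩
    · obtain ⟨j, hj⟩ : ∃ j, v j ≠ 0 := by
        by_contra hc'; push_neg at hc'; exact hv (funext hc')
      have hwj : w j.val ≠ 0 := by
        have : w j.val = v j := by simp [hwdef, j.2]
        rw [this]; exact hj
      intro h0
      apply mul_ne_zero (hune j.val) (hcne _ hwj)
      have hxv : x (j.val, (⟨0, by omega⟩ : Fin s)) = u j.val * c j.val := by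
        simp [hxdef, hwj]
      rw [← hxv, h0, Pi.zero_apply]
    · intro i b
      by_cases hwi : w i = 0
      · have hxz : ∀ b' : Fin s, x (i, b') = 0 := fun b' => by simp [hxdef, hwi]
        rw [hxz b, zero_pow (by omega : 2*s-1 ≠ 0), mul_zero]
        have hne : (Finset.univ.erase b).Nonempty := by
          rw [← Finset.card_pos, Finset.card_erase_of_mem (Finset.mem_univ b),
            Finset.card_univ, Fintype.card_fin]
          omega
        obtain ⟨b', hb'⟩ := hne
        rw [Finset.prod_eq_zero hb' (hxz b'), zero_mul]
      · have hiS := hwS i hwi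
        have hxval : x (i,b) = u i * c i ∨ x (i,b) = c i := by
          by_cases hb : (b:ℕ) = 0
          · left; simp [hxdef, hwi, hb]
          · right; simp [hxdef, hwi, hb]
        have hxne : x (i,b) ≠ 0 := by
          rcases hxval with h | h <;> rw [h]
          · exact mul_ne_zero (hune i) (hcne i hwi)
          · exact hcne i hwi
        apply mul_right_cancel₀ hxne
        have hL : lam * x (i,b)^(2*s-1) * x (i,b) = lam * (α i * w i ^ 2) := by
          rw [mul_assoc, ← pow_succ, show 2*s-1+1 = 2*s by omega, hx2s i hwi b]
        rw [hL]
        rw [mul_right_comm, Finset.prod_erase_mul _ _ (Finset.mem_univ b), hprod i]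
        rw [Finset.sum_congr rfl (fun j _ => hprod j), hsum i hiS]
        ring
end
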